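/- arXiv:1710.01947 — 6 statements merged into one kernel-verified Lean document; each statement's English description precedes it below -/
import Mathlib

section
/- For all integers p ≥ 2 and n ≥ 1, every feedback vertex set of the Sierpiński graph S_p^n has at least p^{n−1}(p−2) vertices, i.e., τ(S_p^n) ≥ p^{n−1}(p−2). -/
open SimpleGraph

/-- The Sierpinski graph `S_p^n` on vertex set `P^n`: two distinct vertices are adjacent
iff they can be written as `s i j^(d-1)` and `s j i^(d-1)`. -/
def sierpinski (p n : Nat) : SimpleGraph (Fin n → Fin p) :=
  SimpleGraph.fromRel (fun u v =>
    ∃ t : Fin n, ∃ i j : Fin p, i ≠ j ∧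
      (∀ k, k < t → u k = v k) ∧ u t = i ∧ v t = j ∧
      (∀ k, t < k → u k = j ∧ v k = i))

/-- `X` is a feedback vertex set of `G` if deleting it leaves an acyclic graph. -/
def IsFeedbackVertexSet {V : Type*} (G : SimpleGraph V) (X : Set V) : Prop :=
  (G.induce Xᶜ).IsAcyclic

/-- The feedback vertex number: the minimum cardinality of a feedback vertex set. -/
noncomputable def feedbackNumber {V : Type*} (G : SimpleGraph V) : Nat :=
  sInf {k | ∃ X : Finset V, X.card = k ∧ IsFeedbackVertexSet G ↑X}

/-- The maximum number of vertices of an induced forest of `G`. -/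
noncomputable def maxInducedForest {V : Type*} (G : SimpleGraph V) : Nat :=
  sSup {k | ∃ Y : Finset V, Y.card = k ∧ (G.induce (↑Y : Set V)).IsAcyclic}

open SimpleGraph

lemma not_acyclic_of_triangle {V : Type*} {G : SimpleGraph V} {a b c : V}
    (hab : G.Adj a b) (hbc : G.Adj b c) (hca : G.Adj c a) : ¬ G.IsAcyclic := by
  intro h
  rw [isAcyclic_iff_forall_adj_isBridge] at h
  have hb := h hab
  rw [isBridge_iff] at hb
  apply hb
  refine ⟨Walk.cons (v := c) ?_ (Walk.cons ?_ Walk.nil)⟩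
  · simp only [deleteEdges_adj, Set.mem_singleton_iff]
    refine ⟨hca.symm, ?_⟩
    simp [Sym2.eq_iff, hbc.ne', hab.ne, hca.ne]
  · simp only [deleteEdges_adj, Set.mem_singleton_iff]
    refine ⟨hbc.symm, ?_⟩
    simp [Sym2.eq_iff, hca.ne, hbc.ne', hab.ne]

lemma sierpinski_adj_last {p n : Nat} (hn : 1 ≤ n) {u v : Fin n → Fin p}
    (hne : u ≠ v) (hagree : ∀ k : Fin n, (k : ℕ) < n - 1 → u k = v k) :
    (sierpinski p n).Adj u v := by
  have hnn : n - 1 < n := by omega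
  set t : Fin n := ⟨n - 1, hnn⟩ with ht
  have hut : u t ≠ v t := by
    intro h
    apply hne; funext k
    rcases lt_or_ge (k : ℕ) (n - 1) with hk | hk
    · exact hagree k hk
    · have hkt : k = t := Fin.ext (by
        show (k : ℕ) = n - 1
        have := k.isLt
        omega)
      rw [hkt, h]
  refine ⟨hne, Or.inl ⟨t, u t, v t, hut, ?_, rfl, rfl, ?_⟩⟩
  · intro k hk
    have h1 : (k : ℕ) < n - 1 := Fin.lt_def.mp hk
    exact hagree k h1
  · intro k hk
    have h1 : n - 1 < (k : ℕ) := Fin.lt_def.mp hk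
    exact absurd k.isLt (by omega)

theorem stmt1 (p n : Nat) (hp : 2 ≤ p) (hn : 1 ≤ n)
    (X : Finset (Fin n → Fin p))
    (hX : IsFeedbackVertexSet (sierpinski p n) ↑X) :
    p ^ (n - 1) * (p - 2) ≤ X.card := by
  classical
  -- drop-last-coordinate map
  set g : (Fin n → Fin p) → (Fin (n - 1) → Fin p) :=
    fun v k => v (Fin.castLE (Nat.sub_le n 1) k) with hg
  -- two vertices with the same g-image agree on all coordinates below n-1
  have hagree : ∀ u v : Fin n → Fin p, g u = g v →
      ∀ k : Fin n, (k : ℕ) < n - 1 → u k = v k := by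
    intro u v huv k hk
    have := congrFun huv ⟨(k : ℕ), hk⟩
    simpa [hg, Fin.castLE] using this
  -- each fiber of g meets Xᶜ in at most 2 elements
  have hfib : ∀ s : Fin (n - 1) → Fin p,
      ((Xᶜ).filter (fun v => g v = s)).card ≤ 2 := by
    intro s
    by_contra hlt
    push_neg at hlt
    obtain ⟨Y, hYsub, hY3⟩ := Finset.exists_subset_card_eq (n := 3) hlt
    obtain ⟨a, b, c, hab, hac, hbc, hYeq⟩ := Finset.card_eq_three.mp hY3
    have ha := hYsub (hYeq ▸ by simp : a ∈ Y)
    have hb := hYsub (hYeq ▸ by simp : b ∈ Y)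
    have hc := hYsub (hYeq ▸ by simp : c ∈ Y)
    simp only [Finset.mem_filter, Finset.mem_compl] at ha hb hc
    have adjab : (sierpinski p n).Adj a b :=
      sierpinski_adj_last hn hab (hagree a b (ha.2.trans hb.2.symm))
    have adjbc : (sierpinski p n).Adj b c :=
      sierpinski_adj_last hn hbc (hagree b c (hb.2.trans hc.2.symm))
    have adjca : (sierpinski p n).Adj c a :=
      sierpinski_adj_last hn (Ne.symm hac) (hagree c a (hc.2.trans ha.2.symm))
    have hX' : ((sierpinski p n).induce (↑X : Set _)ᶜ).IsAcyclic := hX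
    refine not_acyclic_of_triangle (G := (sierpinski p n).induce (↑X : Set _)ᶜ)
      (a := ⟨a, ha.1⟩) (b := ⟨b, hb.1⟩) (c := ⟨c, hc.1⟩) ?_ ?_ ?_ hX'
    · exact adjab
    · exact adjbc
    · exact adjca
  -- count
  have hcount : (Xᶜ).card ≤ p ^ (n - 1) * 2 := by
    rw [Finset.card_eq_sum_card_fiberwise (f := g) (t := Finset.univ)
      (fun x _ => Finset.mem_univ _)]
    calc (∑ s : Fin (n - 1) → Fin p, ((Xᶜ).filter (fun v => g v = s)).card)
        ≤ ∑ _s : Fin (n - 1) → Fin p, 2 := Finset.sum_le_sum (fun s _ => hfib s)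
      _ = p ^ (n - 1) * 2 := by simp [Finset.sum_const, Fintype.card_fun, mul_comm]
  have htot : X.card + (Xᶜ).card = p ^ n := by
    rw [Finset.card_add_card_compl]
    simp [Fintype.card_fun]
  have hpow : p ^ n = p ^ (n - 1) * p := by
    conv_lhs => rw [show n = (n - 1) + 1 by omega]
    rw [pow_succ]
  have hexp : p ^ (n - 1) * p = p ^ (n - 1) * (p - 2) + p ^ (n - 1) * 2 := by
    rw [← Nat.mul_add]
    congr 1
    omega
  have hXc : X.card = p ^ n - (Xᶜ).card := Nat.eq_sub_of_add_eq htot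
  rw [hXc]
  apply Nat.le_sub_of_add_le
  rw [hpow, hexp]
  exact Nat.add_le_add_left hcount _
end

section
/- For all integers p ≥ 2 and n ≥ 1, there exists a set Y of exactly 2p^{n−1} vertices of the Sierpiński graph S_p^n such that the subgraph of S_p^n induced by Y contains no cycle (is a forest). -/
open SimpleGraph

variable {p n : ℕ}

def nuval (p n : ℕ) (u : Fin n → Fin p) : ℕ :=
  ∑ t : Fin n, (u t : ℕ) * p ^ (n - 1 - (t : ℕ))

lemma mygeom_lt (hp : 2 ≤ p) (m : ℕ) : ∑ j ∈ Finset.range m, p ^ j < p ^ m := by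
  induction m with
  | zero => simp
  | succ m ih =>
    rw [Finset.sum_range_succ, pow_succ]
    have : 2 * p ^ m ≤ p ^ m * p := by nlinarith [pow_pos (by omega : 0 < p) m]
    omega

lemma tail_sum_lt (hp : 2 ≤ p) (t : Fin n) :
    ∑ k ∈ Finset.univ.filter (fun k : Fin n => t < k), p ^ (n - 1 - (k : ℕ))
      < p ^ (n - 1 - (t : ℕ)) := by
  have ht := t.isLt
  have : ∑ k ∈ Finset.univ.filter (fun k : Fin n => t < k), p ^ (n - 1 - (k : ℕ))
      = ∑ j ∈ Finset.range (n - 1 - (t : ℕ)), p ^ j := by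
    refine Finset.sum_nbij' (fun k : Fin n => n - 1 - (k : ℕ))
      (fun j => (⟨n - 1 - j, by omega⟩ : Fin n)) ?_ ?_ ?_ ?_ ?_
    · intro k hk
      simp only [Finset.mem_filter, Finset.mem_univ, true_and, Fin.lt_def] at hk
      have := k.isLt
      simp only [Finset.mem_range]; omega
    · intro j hj
      simp only [Finset.mem_range] at hj
      simp only [Finset.mem_filter, Finset.mem_univ, true_and, Fin.lt_def]; omega
    · intro k hk
      simp only [Finset.mem_filter, Finset.mem_univ, true_and, Fin.lt_def] at hk
      have := k.isLt
      apply Fin.ext; simp; omega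
    · intro j hj
      simp only [Finset.mem_range] at hj
      simp; omega
    · intro k hk; rfl
  rw [this]; exact mygeom_lt hp _

lemma nuval_split (t : Fin n) (w : Fin n → Fin p) :
    nuval p n w = (∑ k ∈ Finset.univ.filter (fun k : Fin n => k < t),
        (w k : ℕ) * p ^ (n - 1 - (k : ℕ)))
      + (w t : ℕ) * p ^ (n - 1 - (t : ℕ))
      + ∑ k ∈ Finset.univ.filter (fun k : Fin n => t < k),
          (w k : ℕ) * p ^ (n - 1 - (k : ℕ)) := by
  classical
  rw [nuval, ← Finset.sum_filter_add_sum_filter_not Finset.univ (fun k : Fin n => k < t),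
    add_assoc]
  congr 1
  rw [← Finset.sum_filter_add_sum_filter_not
    (Finset.univ.filter (fun k : Fin n => ¬ k < t)) (fun k : Fin n => k = t)]
  congr 1
  · rw [Finset.filter_filter]
    have : Finset.filter (fun k : Fin n => ¬k < t ∧ k = t) Finset.univ = {t} := by
      ext k
      simp only [Finset.mem_filter, Finset.mem_univ, true_and, Finset.mem_singleton]
      constructor
      · rintro ⟨_, h⟩; exact h
      · rintro rfl; exact ⟨lt_irrefl _, rfl⟩
    rw [this, Finset.sum_singleton]
  · rw [Finset.filter_filter]
    apply Finset.sum_congr _ (fun _ _ => rfl)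
    ext k; simp only [Finset.mem_filter, Finset.mem_univ, true_and]
    constructor
    · rintro ⟨h1, h2⟩; omega
    · intro h; exact ⟨by omega, by omega⟩

lemma nuval_lt (hp : 2 ≤ p) {u v : Fin n → Fin p} (t : Fin n)
    (hpre : ∀ k, k < t → u k = v k) (hut : (u t : ℕ) = 0) (hvt : (v t : ℕ) = 1)
    (htail : ∀ k, t < k → (u k : ℕ) = 1 ∧ (v k : ℕ) = 0) :
    nuval p n u < nuval p n v := by
  rw [nuval_split t u, nuval_split t v]
  have e1 : ∑ k ∈ Finset.univ.filter (fun k : Fin n => k < t),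
      (u k : ℕ) * p ^ (n - 1 - (k : ℕ))
      = ∑ k ∈ Finset.univ.filter (fun k : Fin n => k < t),
      (v k : ℕ) * p ^ (n - 1 - (k : ℕ)) := by
    apply Finset.sum_congr rfl
    intro k hk
    simp only [Finset.mem_filter, Finset.mem_univ, true_and] at hk
    rw [hpre k hk]
  have e2 : ∑ k ∈ Finset.univ.filter (fun k : Fin n => t < k),
      (u k : ℕ) * p ^ (n - 1 - (k : ℕ))
      = ∑ k ∈ Finset.univ.filter (fun k : Fin n => t < k), p ^ (n - 1 - (k : ℕ)) := by
    apply Finset.sum_congr rfl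
    intro k hk
    simp only [Finset.mem_filter, Finset.mem_univ, true_and] at hk
    rw [(htail k hk).1, one_mul]
  have e3 : ∑ k ∈ Finset.univ.filter (fun k : Fin n => t < k),
      (v k : ℕ) * p ^ (n - 1 - (k : ℕ)) = 0 := by
    apply Finset.sum_eq_zero
    intro k hk
    simp only [Finset.mem_filter, Finset.mem_univ, true_and] at hk
    rw [(htail k hk).2, zero_mul]
  rw [e1, e2, e3, hut, hvt, zero_mul, one_mul, add_zero]
  have := tail_sum_lt (n := n) hp t
  omega


lemma rel_char (hn : 1 ≤ n) {u v : Fin n → Fin p}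
    (hu : (u ⟨n - 1, by omega⟩ : ℕ) < 2) (hv : (v ⟨n - 1, by omega⟩ : ℕ) < 2)
    (h : ∃ t : Fin n, ∃ i j : Fin p, i ≠ j ∧
      (∀ k, k < t → u k = v k) ∧ u t = i ∧ v t = j ∧
      (∀ k, t < k → u k = j ∧ v k = i)) :
    ∃ t : Fin n, (∀ k, k < t → u k = v k) ∧ u t ≠ v t ∧
      (u t : ℕ) < 2 ∧ (v t : ℕ) < 2 ∧ (∀ k, t < k → u k = v t ∧ v k = u t) := by
  obtain ⟨t, i, j, hij, hpre, hut, hvt, htail⟩ := h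
  subst hut; subst hvt
  refine ⟨t, hpre, hij, ?_, ?_, htail⟩
  all_goals {
    by_cases ht : (t : ℕ) = n - 1
    · have : t = (⟨n - 1, by omega⟩ : Fin n) := Fin.ext ht
      rw [this]
      first | exact hu | exact hv
    · have htl : t < (⟨n - 1, by omega⟩ : Fin n) := by
        rw [Fin.lt_def]; have := t.isLt; simp; omega
      have := htail _ htl
      first
        | (rw [← this.2]; exact hv)
        | (rw [← this.1]; exact hu) }

lemma adj_cases (hn : 1 ≤ n) {u v : Fin n → Fin p}
    (hu : (u ⟨n - 1, by omega⟩ : ℕ) < 2) (hv : (v ⟨n - 1, by omega⟩ : ℕ) < 2)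
    (h : (sierpinski p n).Adj u v) :
    ∃ t : Fin n, (∀ k, k < t → u k = v k) ∧
      (((u t : ℕ) = 0 ∧ (v t : ℕ) = 1 ∧ ∀ k, t < k → (u k : ℕ) = 1 ∧ (v k : ℕ) = 0) ∨
       ((u t : ℕ) = 1 ∧ (v t : ℕ) = 0 ∧ ∀ k, t < k → (u k : ℕ) = 0 ∧ (v k : ℕ) = 1)) := by
  rw [sierpinski, fromRel_adj] at h
  obtain ⟨hne, h | h⟩ := h
  · obtain ⟨t, hpre, hne', hu2, hv2, htail⟩ := rel_char hn hu hv h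
    have hvalne : (u t : ℕ) ≠ (v t : ℕ) := fun he => hne' (Fin.ext he)
    refine ⟨t, hpre, ?_⟩
    have htail' : ∀ k, t < k → (u k : ℕ) = (v t : ℕ) ∧ (v k : ℕ) = (u t : ℕ) := by
      intro k hk; exact ⟨congrArg Fin.val (htail k hk).1, congrArg Fin.val (htail k hk).2⟩
    rcases (by omega : (u t : ℕ) = 0 ∧ (v t : ℕ) = 1 ∨ (u t : ℕ) = 1 ∧ (v t : ℕ) = 0) with
      ⟨h0, h1⟩ | ⟨h0, h1⟩
    · left; exact ⟨h0, h1, fun k hk => by have := htail' k hk; omega⟩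
    · right; exact ⟨h0, h1, fun k hk => by have := htail' k hk; omega⟩
  · obtain ⟨t, hpre, hne', hv2, hu2, htail⟩ := rel_char hn hv hu h
    have hvalne : (u t : ℕ) ≠ (v t : ℕ) := fun he => hne' (Fin.ext he.symm)
    refine ⟨t, fun k hk => (hpre k hk).symm, ?_⟩
    have htail' : ∀ k, t < k → (v k : ℕ) = (u t : ℕ) ∧ (u k : ℕ) = (v t : ℕ) := by
      intro k hk; exact ⟨congrArg Fin.val (htail k hk).1, congrArg Fin.val (htail k hk).2⟩
    rcases (by omega : (u t : ℕ) = 0 ∧ (v t : ℕ) = 1 ∨ (u t : ℕ) = 1 ∧ (v t : ℕ) = 0) with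
      ⟨h0, h1⟩ | ⟨h0, h1⟩
    · left; exact ⟨h0, h1, fun k hk => by have := htail' k hk; omega⟩
    · right; exact ⟨h0, h1, fun k hk => by have := htail' k hk; omega⟩

lemma adj_nuval_ne (hp : 2 ≤ p) (hn : 1 ≤ n) {u v : Fin n → Fin p}
    (hu : (u ⟨n - 1, by omega⟩ : ℕ) < 2) (hv : (v ⟨n - 1, by omega⟩ : ℕ) < 2)
    (h : (sierpinski p n).Adj u v) : nuval p n u ≠ nuval p n v := by
  obtain ⟨t, hpre, hc | hc⟩ := adj_cases hn hu hv h
  · exact ne_of_lt (nuval_lt hp t hpre hc.1 hc.2.1 hc.2.2)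
  · exact ne_of_gt (nuval_lt hp t (fun k hk => (hpre k hk).symm) hc.2.1 hc.1
      (fun k hk => ⟨(hc.2.2 k hk).2, (hc.2.2 k hk).1⟩))

lemma smaller_unique (hp : 2 ≤ p) (hn : 1 ≤ n) {u v w : Fin n → Fin p}
    (hu : (u ⟨n - 1, by omega⟩ : ℕ) < 2) (hv : (v ⟨n - 1, by omega⟩ : ℕ) < 2)
    (hw : (w ⟨n - 1, by omega⟩ : ℕ) < 2)
    (h1 : (sierpinski p n).Adj u w) (h2 : (sierpinski p n).Adj v w)
    (l1 : nuval p n u < nuval p n w) (l2 : nuval p n v < nuval p n w) : u = v := by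
  obtain ⟨t, hpre, hc⟩ := adj_cases hn hu hw h1
  rcases hc with hc | hc
  · obtain ⟨t', hpre', hc'⟩ := adj_cases hn hv hw h2
    rcases hc' with hc' | hc'
    · -- both smaller; show t = t'
      have htt : t = t' := by
        rcases lt_trichotomy t t' with hlt | heq | hgt
        · exfalso; have ha := (hc.2.2 t' hlt).2
          have hb := hc'.2.1; omega
        · exact heq
        · exfalso; have ha := (hc'.2.2 t hgt).2
          have hb := hc.2.1; omega
      subst htt
      funext k
      apply Fin.ext
      rcases lt_trichotomy k t with hlt | heq | hgt
      · rw [congrArg Fin.val (hpre k hlt), congrArg Fin.val (hpre' k hlt)]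
      · subst heq; omega
      · have := (hc.2.2 k hgt).1; have := (hc'.2.2 k hgt).1; omega
    · exfalso
      have : nuval p n w < nuval p n v :=
        nuval_lt hp t' (fun k hk => (hpre' k hk).symm) hc'.2.1 hc'.1
          (fun k hk => ⟨(hc'.2.2 k hk).2, (hc'.2.2 k hk).1⟩)
      omega
  · exfalso
    have : nuval p n w < nuval p n u :=
      nuval_lt hp t (fun k hk => (hpre k hk).symm) hc.2.1 hc.1
        (fun k hk => ⟨(hc.2.2 k hk).2, (hc.2.2 k hk).1⟩)
    omega


lemma acyclic_of_unique_smaller {V : Type*} [DecidableEq V] (G : SimpleGraph V) (ν : V → ℕ)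
    (h1 : ∀ u w, G.Adj u w → ν u ≠ ν w)
    (h2 : ∀ u v w, G.Adj u w → G.Adj v w → ν u < ν w → ν v < ν w → u = v) :
    G.IsAcyclic := by
  intro v c hc
  -- pick the max vertex on the cycle
  obtain ⟨x, hxmem, hxmax⟩ := c.support.toFinset.exists_max_image ν
    ⟨v, by simp [Walk.start_mem_support]⟩
  rw [List.mem_toFinset] at hxmem
  have hd := hc.rotate hxmem
  set d := c.rotate x hxmem with hdd
  have hmax : ∀ y ∈ d.support, ν y ≤ ν x := by
    intro y hy
    rw [d.support_eq_cons] at hy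
    rcases List.mem_cons.mp hy with hy | hy
    · simp [hy]
    · rw [hdd] at hy
      have : y ∈ c.support.tail := (Walk.support_rotate c x hxmem).mem_iff.mp hy
      exact hxmax y (List.mem_toFinset.mpr (c.support.mem_of_mem_tail this))
  clear_value d
  clear hxmax hc
  cases d with
  | nil => exact Walk.IsCycle.not_of_nil hd
  | cons h q =>
    rename_i w
    rw [Walk.cons_isCycle_iff] at hd
    obtain ⟨hq, hxy⟩ := hd
    have hxyne : x ≠ w := G.ne_of_adj h
    obtain ⟨z, hz, r, hqr⟩ := Walk.exists_eq_cons_of_ne hxyne q.reverse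
    -- z is on q's support
    have hzsup : z ∈ q.support := by
      have : z ∈ q.reverse.support := by rw [hqr]; simp
      simpa using this
    have hzedge : s(x, z) ∈ q.edges := by
      have : s(x, z) ∈ q.reverse.edges := by rw [hqr]; simp
      simpa [Walk.edges_reverse] using this
    have hy1 : ν w < ν x :=
      lt_of_le_of_ne (hmax w (by simp)) (fun he => h1 x w h he.symm)
    have hz1 : ν z < ν x :=
      lt_of_le_of_ne (hmax z (by simp [hzsup])) (fun he => h1 x z hz he.symm)
    have : w = z := h2 w z x h.symm hz.symm hy1 hz1
    subst this
    exact hxy hzedge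


lemma card_lemma (p n : ℕ) (hp : 2 ≤ p) (hn : 1 ≤ n) :
    (Finset.univ.filter
      (fun u : Fin n → Fin p => (u ⟨n - 1, by omega⟩ : ℕ) < 2)).card = 2 * p ^ (n - 1) := by
  classical
  have e : {u : Fin n → Fin p // (u ⟨n - 1, by omega⟩ : ℕ) < 2}
      ≃ Fin 2 × (Fin (n - 1) → Fin p) :=
    { toFun := fun u => (⟨(u.1 ⟨n - 1, by omega⟩ : ℕ), u.2⟩,
        fun i => u.1 ⟨i.1, by omega⟩)
      invFun := fun x => ⟨fun k => if h : (k : ℕ) < n - 1 then x.2 ⟨k.1, h⟩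
          else ⟨x.1.1, by have := x.1.isLt; omega⟩, by
        simp only [dif_neg (lt_irrefl (n - 1))]
        exact x.1.isLt⟩
      left_inv := by
        rintro ⟨u, hu⟩
        apply Subtype.ext
        funext k
        by_cases h : (k : ℕ) < n - 1
        · simp only [dif_pos h]
        · simp only [dif_neg h]
          have hk : k = (⟨n - 1, by omega⟩ : Fin n) := Fin.ext (by
            simp only []
            have := k.isLt; omega)
          rw [hk]
      right_inv := by
        rintro ⟨b, f⟩
        ext
        · simp only [dif_neg (lt_irrefl (n - 1))]
        · rename_i i
          simp only []
          rw [dif_pos i.isLt] }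
  rw [← Fintype.card_subtype, Fintype.card_congr e]
  simp [Fintype.card_fun]

theorem stmt2 (p n : Nat) (hp : 2 ≤ p) (hn : 1 ≤ n) :
    ∃ Y : Finset (Fin n → Fin p), Y.card = 2 * p ^ (n - 1) ∧
      ((sierpinski p n).induce (↑Y : Set (Fin n → Fin p))).IsAcyclic := by
  classical
  refine ⟨Finset.univ.filter
    (fun u : Fin n → Fin p => (u ⟨n - 1, by omega⟩ : ℕ) < 2),
    card_lemma p n hp hn, ?_⟩
  set Y := Finset.univ.filter
    (fun u : Fin n → Fin p => (u ⟨n - 1, by omega⟩ : ℕ) < 2) with hY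
  have hmem : ∀ a : (↑Y : Set (Fin n → Fin p)),
      ((a : Fin n → Fin p) ⟨n - 1, by omega⟩ : ℕ) < 2 := by
    rintro ⟨a, ha⟩
    have := Finset.mem_coe.mp ha
    rw [hY, Finset.mem_filter] at this
    exact this.2
  refine acyclic_of_unique_smaller
    ((sierpinski p n).induce (↑Y : Set (Fin n → Fin p)))
    (fun a => nuval p n (a : Fin n → Fin p)) ?_ ?_
  · intro a b hab
    have h : (sierpinski p n).Adj (a : Fin n → Fin p) (b : Fin n → Fin p) := hab
    exact adj_nuval_ne hp hn (hmem a) (hmem b) h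
  · intro a b c hac hbc l1 l2
    have h1 : (sierpinski p n).Adj (a : Fin n → Fin p) (c : Fin n → Fin p) := hac
    have h2 : (sierpinski p n).Adj (b : Fin n → Fin p) (c : Fin n → Fin p) := hbc
    exact Subtype.ext (smaller_unique hp hn (hmem a) (hmem b) (hmem c) h1 h2 l1 l2)
end

section
/- For all integers p ≥ 2 and n ≥ 1, the maximum number of vertices of an induced forest of the Sierpiński graph S_p^n equals 2p^{n−1}, i.e., f(S_p^n) = 2p^{n−1}. -/
open SimpleGraph

/-! ### Auxiliary material -/

namespace SierpAux

/-- A general acyclicity criterion: a graded graph where every edge changes the grading by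
exactly one, and every vertex has at most one lower neighbour and at most one upper
neighbour, is acyclic. -/
lemma acyclic_of_grading {V : Type*} {G : SimpleGraph V} (f : V → ℕ)
    (hstep : ∀ {u v}, G.Adj u v → f u + 1 = f v ∨ f v + 1 = f u)
    (hdown : ∀ {v a b}, G.Adj v a → G.Adj v b → f a + 1 = f v → f b + 1 = f v → a = b)
    (hup : ∀ {v a b}, G.Adj v a → G.Adj v b → f v + 1 = f a → f v + 1 = f b → a = b) :
    G.IsAcyclic := by
  have key : ∀ {x y : V} (q : G.Walk x y), q.IsPath → 1 ≤ q.length →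
      (f x + q.length = f y ∧ f x + 1 = f (q.getVert 1)) ∨
      (f y + q.length = f x ∧ f (q.getVert 1) + 1 = f x) := by
    intro x y q
    induction q with
    | nil => intro _ h; simp at h
    | @cons x z y h q ih =>
      intro hp _
      have hqp : q.IsPath := ((SimpleGraph.Walk.cons_isPath_iff h q).1 hp).1
      have hxns : x ∉ q.support := ((SimpleGraph.Walk.cons_isPath_iff h q).1 hp).2
      have hget1 : (Walk.cons h q).getVert 1 = z := by
        rw [SimpleGraph.Walk.getVert_cons_succ]; exact q.getVert_zero
      have hlen : (Walk.cons h q).length = q.length + 1 := SimpleGraph.Walk.length_cons h q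
      have hxz := hstep h
      by_cases hq0 : q.length = 0
      · have hzy : z = y := SimpleGraph.Walk.eq_of_length_eq_zero hq0
        subst hzy
        rw [hget1, hlen, hq0]
        rcases hxz with h1 | h1
        · exact Or.inl ⟨h1, h1⟩
        · exact Or.inr ⟨h1, h1⟩
      · have hq1 : 1 ≤ q.length := by omega
        have ihq := ih hqp hq1
        have hz1 : G.Adj z (q.getVert 1) := by
          have := q.adj_getVert_succ (i := 0) (by omega)
          simpa using this
        have hg1mem : q.getVert 1 ∈ q.support :=
          SimpleGraph.Walk.mem_support_iff_exists_getVert.2 ⟨1, rfl, hq1⟩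
        have hxg1 : x ≠ q.getVert 1 := fun e => hxns (e ▸ hg1mem)
        rw [hget1, hlen]
        rcases hxz with h1 | h1 <;> rcases ihq with ⟨h2, h3⟩ | ⟨h2, h3⟩
        · exact Or.inl ⟨by omega, h1⟩
        · exact absurd (hdown h.symm hz1 h1 h3) hxg1
        · exact absurd (hup h.symm hz1 h1 h3) hxg1
        · exact Or.inr ⟨by omega, h1⟩
  intro v c hc
  cases c with
  | nil => exact SimpleGraph.Walk.IsCycle.not_of_nil hc
  | @cons _ w _ h q =>
    obtain ⟨hqp, -⟩ := (SimpleGraph.Walk.cons_isCycle_iff q h).1 hc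
    have hl3 : 3 ≤ (Walk.cons h q).length := hc.three_le_length
    have hlen : (Walk.cons h q).length = q.length + 1 := SimpleGraph.Walk.length_cons h q
    have hq2 : 2 ≤ q.length := by omega
    have hkey := key q hqp (by omega)
    have hvw := hstep h
    rcases hvw with h1 | h1 <;> rcases hkey with ⟨h2, -⟩ | ⟨h2, -⟩ <;> omega

variable {p m : ℕ}

/-- The underlying relation of the Sierpinski graph. -/
def srel (p n : ℕ) (u v : Fin n → Fin p) : Prop :=
  ∃ t : Fin n, ∃ i j : Fin p, i ≠ j ∧
    (∀ k, k < t → u k = v k) ∧ u t = i ∧ v t = j ∧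
    (∀ k, t < k → u k = j ∧ v k = i)

lemma sierpinski_adj {p n : ℕ} {u v : Fin n → Fin p} :
    (sierpinski p n).Adj u v ↔ u ≠ v ∧ (srel p n u v ∨ srel p n v u) :=
  SimpleGraph.fromRel_adj _ u v

section TwoLe
variable [NeZero p]

lemma zero_ne_one' (hp : 2 ≤ p) : (0 : Fin p) ≠ 1 := by
  intro h
  have h0 : ((0 : Fin p) : ℕ) = ((1 : Fin p) : ℕ) := by rw [h]
  have hz : ((0 : Fin p) : ℕ) = 0 := Fin.val_zero p
  have ho : ((1 : Fin p) : ℕ) = 1 % p := Fin.val_one' p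
  have hm : 1 % p = 1 := Nat.mod_eq_of_lt (by omega)
  omega

/-- Normal form of an edge between two vertices of the candidate forest:
`u = s 0 1…1`, `v = s 1 0…0`. -/
def NF (u v : Fin (m + 1) → Fin p) : Prop :=
  ∃ t : Fin (m + 1), (∀ k, k < t → u k = v k) ∧ u t = 0 ∧ v t = 1 ∧
    ∀ k, t < k → u k = 1 ∧ v k = 0

/-- The grading function: binary number formed by the positions of 1's. -/
def psi (u : Fin (m + 1) → Fin p) : ℕ :=
  ∑ k : Fin (m + 1), if u k = 1 then 2 ^ (m - (k : ℕ)) else 0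

lemma sum_split (t : Fin (m + 1)) (g : Fin (m + 1) → ℕ) :
    ∑ k, g k = (∑ k ∈ Finset.univ.filter (· < t), g k) + g t +
      (∑ k ∈ Finset.univ.filter (fun k => t < k), g k) := by
  classical
  rw [← Finset.sum_filter_add_sum_filter_not Finset.univ (· < t) g]
  have h : Finset.univ.filter (fun k => ¬ k < t) =
      insert t (Finset.univ.filter (fun k => t < k)) := by
    ext k
    simp only [Finset.mem_filter, Finset.mem_univ, true_and, Finset.mem_insert, not_lt]
    constructor
    · intro h
      rcases eq_or_lt_of_le h with h | h
      · exact Or.inl h.symm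
      · exact Or.inr h
    · rintro (rfl | h)
      · exact le_refl _
      · exact le_of_lt h
  rw [h, Finset.sum_insert (by simp)]
  omega

lemma pow2_sum (r : ℕ) : (∑ j ∈ Finset.range r, 2 ^ j) + 1 = 2 ^ r := by
  induction r with
  | zero => simp
  | succ r ih => rw [Finset.sum_range_succ, pow_succ]; omega

lemma geom (t : Fin (m + 1)) :
    (∑ k ∈ Finset.univ.filter (fun k => t < k), 2 ^ (m - (k : ℕ))) + 1 = 2 ^ (m - (t : ℕ)) := by
  classical
  have ht : (t : ℕ) ≤ m := by omega
  have h : (∑ k ∈ Finset.univ.filter (fun k => t < k), 2 ^ (m - (k : ℕ)))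
      = ∑ j ∈ Finset.range (m - (t : ℕ)), 2 ^ j := by
    refine Finset.sum_nbij' (fun k => m - (k : ℕ)) (fun j => (⟨m - j, by omega⟩ : Fin (m + 1)))
      ?_ ?_ ?_ ?_ ?_
    · intro a ha
      simp only [Finset.mem_filter, Finset.mem_univ, true_and, Fin.lt_def] at ha
      have : (a : ℕ) ≤ m := by omega
      simp only [Finset.mem_range]
      omega
    · intro a ha
      simp only [Finset.mem_range] at ha
      simp only [Finset.mem_filter, Finset.mem_univ, true_and, Fin.lt_def]
      omega
    · intro a ha
      simp only [Finset.mem_filter, Finset.mem_univ, true_and, Fin.lt_def] at ha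
      have : (a : ℕ) ≤ m := by omega
      apply Fin.ext
      simp
      omega
    · intro a ha
      simp only [Finset.mem_range] at ha
      simp
      omega
    · intro a _
      rfl
  rw [h]
  exact pow2_sum _

lemma psi_succ (hp : 2 ≤ p) {u v : Fin (m + 1) → Fin p} (h : NF u v) :
    psi u + 1 = psi v := by
  classical
  obtain ⟨t, hlt, hu0, hv1, hgt⟩ := h
  have h01 : (0 : Fin p) ≠ 1 := zero_ne_one' hp
  rw [psi, psi, sum_split t, sum_split t]
  have hA : (∑ k ∈ Finset.univ.filter (· < t), if u k = 1 then 2 ^ (m - (k : ℕ)) else 0)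
      = ∑ k ∈ Finset.univ.filter (· < t), if v k = 1 then 2 ^ (m - (k : ℕ)) else 0 := by
    refine Finset.sum_congr rfl fun k hk => ?_
    simp only [Finset.mem_filter, Finset.mem_univ, true_and] at hk
    rw [hlt k hk]
  have hut : (if u t = 1 then 2 ^ (m - (t : ℕ)) else 0) = 0 := by
    rw [if_neg]; rw [hu0]; exact h01
  have hvt : (if v t = 1 then 2 ^ (m - (t : ℕ)) else 0) = 2 ^ (m - (t : ℕ)) := if_pos hv1
  have hBu : (∑ k ∈ Finset.univ.filter (fun k => t < k), if u k = 1 then 2 ^ (m - (k : ℕ)) else 0)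
      = ∑ k ∈ Finset.univ.filter (fun k => t < k), 2 ^ (m - (k : ℕ)) := by
    refine Finset.sum_congr rfl fun k hk => ?_
    simp only [Finset.mem_filter, Finset.mem_univ, true_and] at hk
    rw [if_pos (hgt k hk).1]
  have hBv : (∑ k ∈ Finset.univ.filter (fun k => t < k), if v k = 1 then 2 ^ (m - (k : ℕ)) else 0)
      = 0 := by
    refine Finset.sum_eq_zero fun k hk => ?_
    simp only [Finset.mem_filter, Finset.mem_univ, true_and] at hk
    rw [if_neg]; rw [(hgt k hk).2]; exact h01
  rw [hA, hut, hvt, hBu, hBv]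
  have := geom (m := m) t
  omega

/-- Every edge of the Sierpinski graph between vertices whose last coordinate is 0 or 1
is in normal form one way or the other. -/
lemma adj_nf (hp : 2 ≤ p) {u v : Fin (m + 1) → Fin p}
    (hu : u (Fin.last m) = 0 ∨ u (Fin.last m) = 1)
    (hv : v (Fin.last m) = 0 ∨ v (Fin.last m) = 1)
    (h : (sierpinski p (m + 1)).Adj u v) : NF u v ∨ NF v u := by
  have h01 : (0 : Fin p) ≠ 1 := zero_ne_one' hp
  rw [sierpinski_adj] at h
  obtain ⟨-, h⟩ := h
  have main : ∀ u v : Fin (m + 1) → Fin p,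
      (u (Fin.last m) = 0 ∨ u (Fin.last m) = 1) →
      (v (Fin.last m) = 0 ∨ v (Fin.last m) = 1) →
      srel p (m + 1) u v → NF u v ∨ NF v u := by
    clear h hu hv u v
    intro u v hu hv h
    obtain ⟨t, i, j, hij, hlt, hut, hvt, hgt⟩ := h
    have hi01 : (i = 0 ∨ i = 1) ∧ (j = 0 ∨ j = 1) := by
      by_cases ht : t = Fin.last m
      · subst ht
        constructor
        · rw [← hut]; exact hu
        · rw [← hvt]; exact hv
      · have htlt : t < Fin.last m := lt_of_le_of_ne (Fin.le_last t) ht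
        obtain ⟨hul, hvl⟩ := hgt (Fin.last m) htlt
        constructor
        · rw [← hvl]; exact hv
        · rw [← hul]; exact hu
    obtain ⟨hi, hj⟩ := hi01
    rcases hi with hi | hi <;> rcases hj with hj | hj
    · exact absurd (hi.trans hj.symm) hij
    · subst hi; subst hj
      exact Or.inl ⟨t, hlt, hut, hvt, fun k hk => hgt k hk⟩
    · subst hi; subst hj
      refine Or.inr ⟨t, fun k hk => (hlt k hk).symm, hvt, hut, fun k hk => (hgt k hk).symm⟩
    · exact absurd (hi.trans hj.symm) hij
  rcases h with h | h
  · exact main u v hu hv h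
  · exact (main v u hv hu h).symm

lemma nf_down_unique (hp : 2 ≤ p) {v a b : Fin (m + 1) → Fin p}
    (ha : NF a v) (hb : NF b v) : a = b := by
  have h01 : (0 : Fin p) ≠ 1 := zero_ne_one' hp
  obtain ⟨t1, h1lt, h1a, h1v, h1gt⟩ := ha
  obtain ⟨t2, h2lt, h2a, h2v, h2gt⟩ := hb
  have ht : t1 = t2 := by
    by_contra hne
    rcases lt_or_gt_of_ne hne with hlt | hlt
    · exact h01 (((h1gt t2 hlt).2.symm.trans h2v))
    · exact h01 (((h2gt t1 hlt).2.symm.trans h1v))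
  subst ht
  funext k
  rcases lt_trichotomy k t1 with hk | hk | hk
  · rw [h1lt k hk, h2lt k hk]
  · subst hk; rw [h1a, h2a]
  · rw [(h1gt k hk).1, (h2gt k hk).1]

lemma nf_up_unique (hp : 2 ≤ p) {v a b : Fin (m + 1) → Fin p}
    (ha : NF v a) (hb : NF v b) : a = b := by
  have h01 : (0 : Fin p) ≠ 1 := zero_ne_one' hp
  obtain ⟨t1, h1lt, h1v, h1a, h1gt⟩ := ha
  obtain ⟨t2, h2lt, h2v, h2a, h2gt⟩ := hb
  have ht : t1 = t2 := by
    by_contra hne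
    rcases lt_or_gt_of_ne hne with hlt | hlt
    · exact h01 (h2v.symm.trans (h1gt t2 hlt).1)
    · exact h01 (h1v.symm.trans (h2gt t1 hlt).1)
  subst ht
  funext k
  rcases lt_trichotomy k t1 with hk | hk | hk
  · rw [← h1lt k hk, ← h2lt k hk]
  · subst hk; rw [h1a, h2a]
  · rw [(h1gt k hk).2, (h2gt k hk).2]

/-- Any two distinct vertices sharing the same first `m` coordinates are adjacent. -/
lemma adj_of_init_eq (hp : 2 ≤ p) {u v : Fin (m + 1) → Fin p}
    (hne : u ≠ v) (hinit : Fin.init u = Fin.init v) : (sierpinski p (m + 1)).Adj u v := by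
  have hlast : u (Fin.last m) ≠ v (Fin.last m) := by
    intro e
    apply hne
    rw [← Fin.snoc_init_self u, ← Fin.snoc_init_self v, hinit, e]
  rw [sierpinski_adj]
  refine ⟨hne, Or.inl ⟨Fin.last m, u (Fin.last m), v (Fin.last m), hlast, ?_, rfl, rfl, ?_⟩⟩
  · intro k hk
    have hk' : k ≠ Fin.last m := ne_of_lt hk
    have := congrFun hinit (k.castPred hk')
    simpa [Fin.init, Fin.castSucc_castPred] using this
  · intro k hk
    exact absurd (Fin.le_last k) (not_le.2 hk)

end TwoLe

end SierpAux

open SierpAux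

theorem stmt3 (p n : Nat) (hp : 2 ≤ p) (hn : 1 ≤ n) :
    maxInducedForest (sierpinski p n) = 2 * p ^ (n - 1) := by
  classical
  haveI : NeZero p := ⟨by omega⟩
  obtain ⟨m, rfl⟩ : ∃ m, n = m + 1 := ⟨n - 1, by omega⟩
  simp only [Nat.add_sub_cancel]
  have h01 : (0 : Fin p) ≠ 1 := zero_ne_one' hp
  set S : Set ℕ :=
    {k | ∃ Y : Finset (Fin (m + 1) → Fin p), Y.card = k ∧
      ((sierpinski p (m + 1)).induce (↑Y : Set (Fin (m + 1) → Fin p))).IsAcyclic} with hS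
  -- Upper bound: any induced forest has at most two vertices in each clique of
  -- vertices sharing the first `m` coordinates.
  have hub : ∀ k ∈ S, k ≤ 2 * p ^ m := by
    rintro k ⟨Yf, rfl, hacyc⟩
    have hfib : ∀ a ∈ Yf.image Fin.init, (Yf.filter fun x => Fin.init x = a).card ≤ 2 := by
      intro a _
      by_contra hgt
      have h3 : 2 < (Yf.filter fun x => Fin.init x = a).card := by omega
      obtain ⟨x, y, z, hx, hy, hz, hxy, hxz, hyz⟩ := Finset.two_lt_card_iff.1 h3
      simp only [Finset.mem_filter] at hx hy hz
      have hxy' := adj_of_init_eq hp hxy (hx.2.trans hy.2.symm)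
      have hyz' := adj_of_init_eq hp hyz (hy.2.trans hz.2.symm)
      have hzx' := adj_of_init_eq hp hxz.symm (hz.2.trans hx.2.symm)
      set X : ↥(↑Yf : Set (Fin (m + 1) → Fin p)) := ⟨x, Finset.mem_coe.2 hx.1⟩
      set Y : ↥(↑Yf : Set (Fin (m + 1) → Fin p)) := ⟨y, Finset.mem_coe.2 hy.1⟩
      set Z : ↥(↑Yf : Set (Fin (m + 1) → Fin p)) := ⟨z, Finset.mem_coe.2 hz.1⟩
      have hXY : ((sierpinski p (m + 1)).induce (↑Yf : Set _)).Adj X Y := hxy'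
      have hYZ : ((sierpinski p (m + 1)).induce (↑Yf : Set _)).Adj Y Z := hyz'
      have hZX : ((sierpinski p (m + 1)).induce (↑Yf : Set _)).Adj Z X := hzx'
      have hcyc : (Walk.cons hXY (Walk.cons hYZ (Walk.cons hZX Walk.nil))).IsCycle := by
        have hXYne : X ≠ Y := fun e => hxy (congrArg Subtype.val e)
        have hXZne : X ≠ Z := fun e => hxz (congrArg Subtype.val e)
        have hYZne : Y ≠ Z := fun e => hyz (congrArg Subtype.val e)
        rw [SimpleGraph.Walk.cons_isCycle_iff]
        constructor
        · simp [SimpleGraph.Walk.cons_isPath_iff, hYZne, hXZne.symm, hXYne.symm]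
        · simp only [SimpleGraph.Walk.edges_cons, SimpleGraph.Walk.edges_nil,
            List.mem_cons, List.not_mem_nil, or_false]
          rintro (h | h) <;> rw [Sym2.eq_iff] at h <;>
            rcases h with ⟨h1, h2⟩ | ⟨h1, h2⟩ <;>
            first
              | exact hYZne h2 | exact hYZne h2.symm | exact hYZne h1 | exact hYZne h1.symm
              | exact hXZne h1 | exact hXZne h1.symm | exact hXZne h2 | exact hXZne h2.symm
              | exact hXYne h1 | exact hXYne h1.symm | exact hXYne h2 | exact hXYne h2.symm
      exact hacyc _ hcyc
    have h1 : Yf.card ≤ 2 * (Yf.image Fin.init).card :=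
      Finset.card_le_mul_card_image Yf 2 hfib
    have h2 : (Yf.image Fin.init).card ≤ p ^ m := by
      calc (Yf.image Fin.init).card ≤ Fintype.card (Fin m → Fin p) := by
            simpa using Finset.card_le_univ (Yf.image Fin.init)
        _ = p ^ m := by simp [Fintype.card_fun]
    omega
  -- Lower bound: the set of vertices whose last coordinate is 0 or 1.
  set F : Finset (Fin (m + 1) → Fin p) :=
    Finset.univ.filter (fun u => u (Fin.last m) = 0 ∨ u (Fin.last m) = 1) with hF
  have hmemF : ∀ x : ↥(↑F : Set (Fin (m + 1) → Fin p)),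
      x.val (Fin.last m) = 0 ∨ x.val (Fin.last m) = 1 := by
    rintro ⟨x, hx⟩
    have := Finset.mem_coe.1 hx
    rw [hF, Finset.mem_filter] at this
    exact this.2
  have hcard : F.card = 2 * p ^ m := by
    have e : {u : Fin (m + 1) → Fin p // u (Fin.last m) = 0 ∨ u (Fin.last m) = 1} ≃
        (Fin m → Fin p) × {i : Fin p // i = 0 ∨ i = 1} :=
      { toFun := fun u => (Fin.init u.val, ⟨u.val (Fin.last m), u.2⟩)
        invFun := fun x => ⟨Fin.snoc x.1 x.2.val, by
          rw [Fin.snoc_last]; exact x.2.2⟩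
        left_inv := fun u => Subtype.ext (Fin.snoc_init_self u.val)
        right_inv := fun x => by
          refine Prod.ext ?_ (Subtype.ext ?_) <;> simp }
    have h2 : Fintype.card {i : Fin p // i = 0 ∨ i = 1} = 2 := by
      rw [Fintype.card_subtype]
      have : (Finset.univ.filter fun i : Fin p => i = 0 ∨ i = 1) = {0, 1} := by
        ext i
        simp [Finset.mem_insert]
      rw [this]
      rw [Finset.card_insert_of_notMem (by simp [h01]), Finset.card_singleton]
    have : F.card = Fintype.card
        {u : Fin (m + 1) → Fin p // u (Fin.last m) = 0 ∨ u (Fin.last m) = 1} :=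
      (Fintype.card_subtype _).symm
    rw [this, Fintype.card_congr e, Fintype.card_prod, Fintype.card_fun, h2,
      Fintype.card_fin, Fintype.card_fin]
    ring
  have hacyclic : ((sierpinski p (m + 1)).induce (↑F : Set (Fin (m + 1) → Fin p))).IsAcyclic := by
    apply acyclic_of_grading (f := fun x => psi x.val)
    · intro u v huv
      have h := adj_nf hp (hmemF u) (hmemF v) huv
      rcases h with h | h
      · exact Or.inl (psi_succ hp h)
      · exact Or.inr (psi_succ hp h)
    · intro v a b hva hvb hfa hfb
      have h1 := adj_nf hp (hmemF v) (hmemF a) hva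
      have h2 := adj_nf hp (hmemF v) (hmemF b) hvb
      have h1' : NF a.val v.val := by
        rcases h1 with h | h
        · exact absurd (psi_succ hp h) (by omega)
        · exact h
      have h2' : NF b.val v.val := by
        rcases h2 with h | h
        · exact absurd (psi_succ hp h) (by omega)
        · exact h
      exact Subtype.ext (nf_down_unique hp h1' h2')
    · intro v a b hva hvb hfa hfb
      have h1 := adj_nf hp (hmemF v) (hmemF a) hva
      have h2 := adj_nf hp (hmemF v) (hmemF b) hvb
      have h1' : NF v.val a.val := by
        rcases h1 with h | h
        · exact h
        · exact absurd (psi_succ hp h) (by omega)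
      have h2' : NF v.val b.val := by
        rcases h2 with h | h
        · exact h
        · exact absurd (psi_succ hp h) (by omega)
      exact Subtype.ext (nf_up_unique hp h1' h2')
  have hmem : 2 * p ^ m ∈ S := ⟨F, hcard, hacyclic⟩
  have hbdd : BddAbove S := ⟨2 * p ^ m, fun k hk => hub k hk⟩
  exact le_antisymm (csSup_le ⟨_, hmem⟩ hub) (le_csSup hbdd hmem)
end

section
/- Let p ≥ 2 and m ≥ 2 be integers and let P = {0,...,p−1}. If Y ⊆ P^{m−1} is pairable, then C(Y) ⊆ P^m is pairable and head(C(Y)) = {s·a : s ∈ head(Y), a ∈ P}. -/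
open SimpleGraph

def headSet (p r : Nat) (Y : Set (Fin (r+1) → Fin p)) : Set (Fin r → Fin p) :=
  {h | ∃ a : Fin p, Fin.snoc h a ∈ Y}

def Pairable (p r : Nat) (Y : Set (Fin (r+1) → Fin p)) : Prop :=
  ∃ (H : Set (Fin r → Fin p)) (A B : (Fin r → Fin p) → Fin p),
    (∀ h ∈ H, A h ≠ B h) ∧
    Y = ⋃ h ∈ H, {Fin.snoc h (A h), Fin.snoc h (B h)}

def CSet (p r : Nat) [NeZero p] (Y : Set (Fin (r+1) → Fin p)) :
    Set (Fin (r+1+1) → Fin p) :=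
  {z | ∃ (h : Fin r → Fin p) (a b : Fin p), a ≠ b ∧
      Fin.snoc h a ∈ Y ∧ Fin.snoc h b ∈ Y ∧
      ((∃ x ∈ ({a, b} : Set (Fin p)), ∃ y ∈ ({a, b} : Set (Fin p)),
          z = Fin.snoc (Fin.snoc h x) y) ∨
       (∃ k : Fin p, k ≠ a ∧ k ≠ b ∧
          (z = Fin.snoc (Fin.snoc h k) (k - 1) ∨ z = Fin.snoc (Fin.snoc h k) (k + 1))))}

/-! ### Auxiliary machinery -/

lemma snoc_inj' {n : ℕ} {α : Type*} {h h' : Fin n → α} {a a' : α} :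
    Fin.snoc (α := fun _ => α) h a = Fin.snoc h' a' ↔ h = h' ∧ a = a' := by
  constructor
  · intro e
    refine ⟨?_, ?_⟩
    · have := congrArg Fin.init e
      simpa using this
    · have := congrArg (fun f => f (Fin.last n)) e
      simpa using this
  · rintro ⟨rfl, rfl⟩; rfl

def primeA (p r : Nat) [NeZero p] (A B : (Fin r → Fin p) → Fin p) :
    (Fin (r+1) → Fin p) → Fin p := fun w =>
  if w (Fin.last r) = A (Fin.init w) ∨ w (Fin.last r) = B (Fin.init w) then
    A (Fin.init w)
  else w (Fin.last r) - 1

def primeB (p r : Nat) [NeZero p] (A B : (Fin r → Fin p) → Fin p) :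
    (Fin (r+1) → Fin p) → Fin p := fun w =>
  if w (Fin.last r) = A (Fin.init w) ∨ w (Fin.last r) = B (Fin.init w) then
    B (Fin.init w)
  else w (Fin.last r) + 1

lemma primeA_snoc (p r : Nat) [NeZero p] (A B : (Fin r → Fin p) → Fin p)
    (h : Fin r → Fin p) (x : Fin p) :
    primeA p r A B (Fin.snoc h x) =
      if x = A h ∨ x = B h then A h else x - 1 := by
  simp [primeA]

lemma primeB_snoc (p r : Nat) [NeZero p] (A B : (Fin r → Fin p) → Fin p)
    (h : Fin r → Fin p) (x : Fin p) :
    primeB p r A B (Fin.snoc h x) =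
      if x = A h ∨ x = B h then B h else x + 1 := by
  simp [primeB]

lemma two_distinct_false {p : ℕ} [NeZero p] {a b k : Fin p}
    (hka : k ≠ a) (hkb : k ≠ b) (hab : a ≠ b) (h : k - 1 = k + 1) : False := by
  have h3 : 3 ≤ p := by
    have : ({a, b, k} : Finset (Fin p)).card = 3 := by
      rw [Finset.card_insert_of_notMem (by simp [hab, hka.symm]),
        Finset.card_insert_of_notMem (by simp [hkb.symm]), Finset.card_singleton]
    calc 3 = ({a, b, k} : Finset (Fin p)).card := this.symm
      _ ≤ Fintype.card (Fin p) := Finset.card_le_univ _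
      _ = p := Fintype.card_fin p
  have h2 : (1 : Fin p) + 1 = 0 := by open Fin.CommRing in linear_combination -h
  have h4 : ((1 : Fin p) + 1).val = (0 : Fin p).val := congrArg Fin.val h2
  rw [Fin.val_add, Fin.val_one', Fin.val_zero] at h4
  rw [Nat.mod_eq_of_lt (show 1 < p by omega)] at h4
  rw [Nat.mod_eq_of_lt (show 1 + 1 < p by omega)] at h4
  omega

theorem stmt4 (p r : Nat) [NeZero p] (hp : 2 ≤ p)
    (Y : Set (Fin (r+1) → Fin p)) (hY : Pairable p r Y) :
    Pairable p (r+1) (CSet p r Y) ∧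
    headSet p (r+1) (CSet p r Y) =
      {w | ∃ h ∈ headSet p r Y, ∃ a : Fin p, w = Fin.snoc h a} := by
  classical
  obtain ⟨H, A, B, hAB, hYeq⟩ := hY
  -- membership characterization of Y
  have memY : ∀ (h : Fin r → Fin p) (a : Fin p),
      Fin.snoc h a ∈ Y ↔ h ∈ H ∧ (a = A h ∨ a = B h) := by
    intro h a
    rw [hYeq]
    simp only [Set.mem_iUnion, Set.mem_insert_iff, Set.mem_singleton_iff]
    constructor
    · rintro ⟨h', hh', (e | e)⟩ <;>
      · obtain ⟨rfl, rfl⟩ := snoc_inj'.mp e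
        exact ⟨hh', by tauto⟩
    · rintro ⟨hh, (rfl | rfl)⟩
      · exact ⟨h, hh, Or.inl rfl⟩
      · exact ⟨h, hh, Or.inr rfl⟩
  set A' := primeA p r A B with hA'
  set B' := primeB p r A B with hB'
  -- the key structural equality
  have hCeq : CSet p r Y =
      ⋃ w ∈ {w : Fin (r+1) → Fin p | Fin.init w ∈ H},
        ({Fin.snoc w (A' w), Fin.snoc w (B' w)} : Set (Fin (r+1+1) → Fin p)) := by
    ext z
    simp only [CSet, Set.mem_setOf_eq, Set.mem_iUnion, Set.mem_insert_iff,
      Set.mem_singleton_iff, exists_prop]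
    constructor
    · rintro ⟨h, a, b, hab, hay, hby, hz⟩
      obtain ⟨hH, ha⟩ := (memY h a).mp hay
      obtain ⟨-, hb⟩ := (memY h b).mp hby
      have hcase : (a = A h ∧ b = B h) ∨ (a = B h ∧ b = A h) := by
        rcases ha with rfl | rfl <;> rcases hb with rfl | rfl <;> tauto
      rcases hz with ⟨x, hx, y, hy, rfl⟩ | ⟨k, hka, hkb, hz⟩
      · have hx' : x = A h ∨ x = B h := by
          rcases hcase with ⟨rfl, rfl⟩ | ⟨rfl, rfl⟩ <;> tauto
        have hy' : y = A h ∨ y = B h := by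
          rcases hcase with ⟨rfl, rfl⟩ | ⟨rfl, rfl⟩ <;> tauto
        refine ⟨Fin.snoc h x, by simpa using hH, ?_⟩
        rw [hA', hB', primeA_snoc, primeB_snoc, if_pos hx', if_pos hx']
        rcases hy' with rfl | rfl
        · exact Or.inl rfl
        · exact Or.inr rfl
      · have hkA : k ≠ A h := by
          rcases hcase with ⟨rfl, rfl⟩ | ⟨rfl, rfl⟩ <;> assumption
        have hkB : k ≠ B h := by
          rcases hcase with ⟨rfl, rfl⟩ | ⟨rfl, rfl⟩ <;> assumption
        refine ⟨Fin.snoc h k, by simpa using hH, ?_⟩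
        rw [hA', hB', primeA_snoc, primeB_snoc, if_neg (by tauto), if_neg (by tauto)]
        exact hz
    · rintro ⟨w, hw, hz⟩
      set h := Fin.init w with hh
      set k := w (Fin.last r) with hk
      have hwk : w = Fin.snoc h k := (Fin.snoc_init_self w).symm
      refine ⟨h, A h, B h, hAB h hw, (memY h _).mpr ⟨hw, Or.inl rfl⟩,
        (memY h _).mpr ⟨hw, Or.inr rfl⟩, ?_⟩
      rw [hwk, hA', hB', primeA_snoc, primeB_snoc] at hz
      by_cases hc : k = A h ∨ k = B h
      · rw [if_pos hc, if_pos hc] at hz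
        refine Or.inl ⟨k, by simpa using hc, ?_⟩
        rcases hz with rfl | rfl
        · exact ⟨A h, by simp, rfl⟩
        · exact ⟨B h, by simp, rfl⟩
      · push_neg at hc
        rw [if_neg (by tauto), if_neg (by tauto)] at hz
        exact Or.inr ⟨k, hc.1, hc.2, hz⟩
  constructor
  · refine ⟨{w : Fin (r+1) → Fin p | Fin.init w ∈ H}, A', B', ?_, hCeq⟩
    intro w hw
    have hwk : w = Fin.snoc (Fin.init w) (w (Fin.last r)) := (Fin.snoc_init_self w).symm
    rw [hwk, hA', hB', primeA_snoc, primeB_snoc]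
    set h := Fin.init w
    set k := w (Fin.last r)
    by_cases hc : k = A h ∨ k = B h
    · rw [if_pos hc, if_pos hc]; exact hAB h hw
    · push_neg at hc
      rw [if_neg (by tauto), if_neg (by tauto)]
      intro heq
      exact two_distinct_false hc.1 hc.2 (hAB h hw) heq
  · ext w
    simp only [headSet, Set.mem_setOf_eq, hCeq, Set.mem_iUnion, Set.mem_insert_iff,
      Set.mem_singleton_iff, exists_prop]
    constructor
    · rintro ⟨c, v, hv, (e | e)⟩ <;>
      · obtain ⟨rfl, rfl⟩ := snoc_inj'.mp e
        exact ⟨Fin.init w, ⟨A (Fin.init w), (memY _ _).mpr ⟨hv, Or.inl rfl⟩⟩,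
          w (Fin.last r), (Fin.snoc_init_self w).symm⟩
    · rintro ⟨h, ⟨a, hha⟩, c, rfl⟩
      obtain ⟨hH, -⟩ := (memY h a).mp hha
      exact ⟨A' (Fin.snoc h c), Fin.snoc h c, by simpa using hH, Or.inl rfl⟩
end

section
/- For all integers p ≥ 1 and n ≥ 0, the generalized Sierpiński triangle graph Ŝ_p^n has exactly p(p^n + 1)/2 vertices and exactly (p−1)p^{n+1}/2 edges. -/
open SimpleGraph

/-- The non-clique edges of `S_p^(n+1)`: edges `{s i j^l, s j i^l}` with `l ≥ 1`,
i.e. adjacency witnessed at a position `t` with `t < n`. -/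
def nonCliqueRel (p n : Nat) (u v : Fin (n+1) → Fin p) : Prop :=
  ∃ t : Fin (n+1), (t : Nat) < n ∧ ∃ i j : Fin p, i ≠ j ∧
    (∀ k, k < t → u k = v k) ∧ u t = i ∧ v t = j ∧
    (∀ k, t < k → u k = j ∧ v k = i)

/-- The setoid identifying the two endpoints of every non-clique edge of `S_p^(n+1)`. -/
def triSetoid (p n : Nat) : Setoid (Fin (n+1) → Fin p) :=
  Relation.EqvGen.setoid (nonCliqueRel p n)

/-- The generalized Sierpinski triangle graph: the contraction of all
non-clique edges of `S_p^(n+1)`. -/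
def sierpinskiTriangle (p n : Nat) : SimpleGraph (Quotient (triSetoid p n)) where
  Adj x y := x ≠ y ∧ ∃ u v : Fin (n+1) → Fin p,
    Quotient.mk (triSetoid p n) u = x ∧ Quotient.mk (triSetoid p n) v = y ∧
    (sierpinski p (n+1)).Adj u v
  symm := by
    constructor
    rintro x y ⟨hxy, u, v, hu, hv, h⟩
    exact ⟨hxy.symm, v, u, hv, hu, h.symm⟩
  loopless := by
    constructor
    rintro x ⟨hxx, -⟩
    exact hxx rfl


namespace Stmt10Aux

variable {p n : Nat}

lemma ncr_iff {u v : Fin (n+1) → Fin p} :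
    nonCliqueRel p n u v ↔ ∃ t : Fin (n+1), (t : Nat) < n ∧ u t ≠ v t ∧
      (∀ k, k < t → u k = v k) ∧ (∀ k, t < k → u k = v t ∧ v k = u t) := by
  constructor
  · rintro ⟨t, ht, i, j, hij, hpre, hu, hv, htail⟩
    subst hu; subst hv
    exact ⟨t, ht, hij, hpre, htail⟩
  · rintro ⟨t, ht, hne, hpre, htail⟩
    exact ⟨t, ht, u t, v t, hne, hpre, rfl, rfl, htail⟩

lemma ncr_symm {u v : Fin (n+1) → Fin p} (h : nonCliqueRel p n u v) :
    nonCliqueRel p n v u := by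
  rw [ncr_iff] at h ⊢
  obtain ⟨t, ht, hne, hpre, htail⟩ := h
  exact ⟨t, ht, hne.symm, fun k hk => (hpre k hk).symm,
    fun k hk => ⟨(htail k hk).2, (htail k hk).1⟩⟩

lemma lt_lastF {t : Fin (n+1)} (ht : (t : Nat) < n) : t < Fin.last n := by
  rw [Fin.lt_def, Fin.val_last]; exact ht

lemma ncr_unique {u v w : Fin (n+1) → Fin p} (h1 : nonCliqueRel p n u v)
    (h2 : nonCliqueRel p n u w) : v = w := by
  rw [ncr_iff] at h1 h2
  obtain ⟨t, ht, hne, hpre, htail⟩ := h1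
  obtain ⟨t', ht', hne', hpre', htail'⟩ := h2
  have hlastv : u (Fin.last n) = v t := (htail _ (lt_lastF ht)).1
  have hlastw : u (Fin.last n) = w t' := (htail' _ (lt_lastF ht')).1
  have htt : t = t' := by
    by_contra hdiff
    rcases lt_or_gt_of_ne hdiff with hlt | hlt
    · exact hne' (((htail t' hlt).1).trans (hlastv ▸ hlastw))
    · exact hne (((htail' t hlt).1).trans (hlastw ▸ hlastv))
  subst htt
  funext k
  rcases lt_trichotomy k t with hk | hk | hk
  · exact (hpre k hk).symm.trans (hpre' k hk)
  · subst hk; exact hlastv.symm.trans hlastw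
  · exact ((htail k hk).2).trans ((htail' k hk).2).symm

lemma quotient_eq_iff {u v : Fin (n+1) → Fin p} :
    Quotient.mk (triSetoid p n) u = Quotient.mk (triSetoid p n) v ↔
      u = v ∨ nonCliqueRel p n u v := by
  constructor
  · intro h
    have h' : Relation.EqvGen (nonCliqueRel p n) u v := Quotient.exact h
    clear h
    induction h' with
    | rel a b hab => exact Or.inr hab
    | refl a => exact Or.inl rfl
    | symm a b _ ih =>
      rcases ih with rfl | h'
      · exact Or.inl rfl
      · exact Or.inr (ncr_symm h')
    | trans a b c _ _ ih1 ih2 =>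
      rcases ih1 with rfl | h1
      · exact ih2
      · rcases ih2 with rfl | h2
        · exact Or.inr h1
        · exact Or.inl (ncr_unique (ncr_symm h1) h2)
  · rintro (rfl | h)
    · rfl
    · exact Quotient.sound (Relation.EqvGen.rel _ _ h)

end Stmt10Aux

section
variable {p n : Nat}
open Stmt10Aux

namespace Stmt10Aux

/-- Extend `s : Fin n → Fin p` by a last coordinate `a`. -/
def extF (s : Fin n → Fin p) (a : Fin p) : Fin (n+1) → Fin p :=
  fun k => if h : (k : Nat) < n then s ⟨k, h⟩ else a

lemma extF_lt {s : Fin n → Fin p} {a : Fin p} {k : Fin (n+1)} (h : (k : Nat) < n) :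
    extF s a k = s ⟨k, h⟩ := dif_pos h

lemma extF_last {s : Fin n → Fin p} {a : Fin p} : extF s a (Fin.last n) = a :=
  dif_neg (by simp)

lemma eq_last_of_not_lt {k : Fin (n+1)} (h : ¬ (k : Nat) < n) : k = Fin.last n :=
  Fin.ext (le_antisymm (Nat.lt_succ_iff.mp k.isLt) (le_of_not_gt h))

lemma eq_extF (u : Fin (n+1) → Fin p) :
    u = extF (fun m => u (Fin.castSucc m)) (u (Fin.last n)) := by
  funext k
  by_cases h : (k : Nat) < n
  · rw [extF_lt h]
    congr 1
  · rw [eq_last_of_not_lt h, extF_last]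

lemma extF_inj {s s' : Fin n → Fin p} {a a' : Fin p} (h : extF s a = extF s' a') :
    s = s' ∧ a = a' := by
  constructor
  · funext m
    have := congrFun h ⟨(m : Nat), m.isLt.trans (Nat.lt_succ_self n)⟩
    rwa [extF_lt m.isLt, extF_lt m.isLt] at this
  · have := congrFun h (Fin.last n)
    rwa [extF_last, extF_last] at this

/-- no non-clique relation between functions agreeing below `n` -/
lemma ncr_not_of_agree {u v : Fin (n+1) → Fin p}
    (hagree : ∀ k : Fin (n+1), (k : Nat) < n → u k = v k) :
    ¬ nonCliqueRel p n u v := by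
  rw [ncr_iff]
  rintro ⟨t, ht, hne, -, -⟩
  exact hne (hagree t ht)

lemma ncr_nonconst {u v : Fin (n+1) → Fin p} (h : nonCliqueRel p n u v) :
    ∃ k, u k ≠ u (Fin.last n) := by
  rw [ncr_iff] at h
  obtain ⟨t, ht, hne, -, htail⟩ := h
  exact ⟨t, fun hc => hne (hc.trans (htail _ (lt_lastF ht)).1)⟩

lemma exists_partner {u : Fin (n+1) → Fin p} (hu : ∃ k, u k ≠ u (Fin.last n)) :
    ∃ v, nonCliqueRel p n u v := by
  classical
  set T : Finset (Fin (n+1)) := Finset.univ.filter (fun k => u k ≠ u (Fin.last n)) with hT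
  have hTne : T.Nonempty := by
    obtain ⟨k, hk⟩ := hu
    exact ⟨k, by simp [hT, hk]⟩
  set t := T.max' hTne with htdef
  have htmem : u t ≠ u (Fin.last n) := by
    have := T.max'_mem hTne
    simpa [hT] using this
  have hmax : ∀ k, t < k → u k = u (Fin.last n) := by
    intro k hk
    by_contra hc
    have : k ∈ T := by simp [hT, hc]
    exact absurd (T.le_max' k this) (not_le_of_gt hk)
  have htn : (t : Nat) < n := by
    have h1 : (t : Nat) ≤ n := Nat.lt_succ_iff.mp t.isLt
    rcases lt_or_eq_of_le h1 with h | h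
    · exact h
    · exact absurd (Fin.ext h : t = Fin.last n) (fun he => htmem (by rw [he]))
  refine ⟨fun k => if k < t then u k else if k = t then u (Fin.last n) else u t,
    ncr_iff.mpr ⟨t, htn, ?_, ?_, ?_⟩⟩
  · simpa [lt_irrefl] using htmem
  · intro k hk; simp [hk]
  · intro k hk
    constructor
    · simpa [lt_irrefl] using (hmax k hk).trans (by simp [lt_irrefl])
    · simp [not_lt_of_gt hk, (ne_of_gt hk)]

end Stmt10Aux
end

section
variable {p n : Nat}

namespace Stmt10Aux

lemma ext_class_inj {s s' : Fin n → Fin p} {a b a' b' : Fin p} (hab : a ≠ b)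
    (h1 : Quotient.mk (triSetoid p n) (extF s a) = Quotient.mk (triSetoid p n) (extF s' a'))
    (h2 : Quotient.mk (triSetoid p n) (extF s b) = Quotient.mk (triSetoid p n) (extF s' b')) :
    s = s' ∧ a = a' ∧ b = b' := by
  rw [quotient_eq_iff] at h1 h2
  rcases h1 with h1 | h1
  · obtain ⟨hs, ha⟩ := extF_inj h1
    subst hs
    rcases h2 with h2 | h2
    · obtain ⟨-, hb⟩ := extF_inj h2
      exact ⟨rfl, ha, hb⟩
    · exact absurd h2 (ncr_not_of_agree (fun k hk => by rw [extF_lt hk, extF_lt hk]))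
  · rcases h2 with h2 | h2
    · obtain ⟨hs, -⟩ := extF_inj h2
      subst hs
      exact absurd h1 (ncr_not_of_agree (fun k hk => by rw [extF_lt hk, extF_lt hk]))
    · exfalso
      rw [ncr_iff] at h1 h2
      obtain ⟨t, ht, hne, hpre, htail⟩ := h1
      obtain ⟨t', ht', hne', hpre', htail'⟩ := h2
      -- facts
      have hsa : s' ⟨(t : Nat), ht⟩ = a := by
        have := (htail _ (lt_lastF ht)).1
        rw [extF_last, extF_lt ht] at this
        exact this.symm
      have hsna : s ⟨(t : Nat), ht⟩ ≠ a := fun hc =>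
        hne (by rw [extF_lt ht, extF_lt ht, hc, hsa])
      have hsb : s' ⟨(t' : Nat), ht'⟩ = b := by
        have := (htail' _ (lt_lastF ht')).1
        rw [extF_last, extF_lt ht'] at this
        exact this.symm
      have hsnb : s ⟨(t' : Nat), ht'⟩ ≠ b := fun hc =>
        hne' (by rw [extF_lt ht', extF_lt ht', hc, hsb])
      rcases lt_trichotomy t t' with hk | hk | hk
      · have := hpre' t hk
        rw [extF_lt ht, extF_lt ht] at this
        exact hsna (this.trans hsa)
      · subst hk
        exact hab (hsa.symm.trans (by rw [show (⟨(t:Nat),ht⟩ : Fin n) = ⟨(t:Nat),ht'⟩ from rfl, hsb]))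
      · have := hpre t' hk
        rw [extF_lt ht', extF_lt ht'] at this
        exact hsnb (this.trans hsb)

lemma extF_ne {s : Fin n → Fin p} {a b : Fin p} (hab : a ≠ b) : extF s a ≠ extF s b :=
  fun h => hab (extF_inj h).2

lemma ext_adj {s : Fin n → Fin p} {i j : Fin p} (hij : i ≠ j) :
    (sierpinski p (n+1)).Adj (extF s i) (extF s j) := by
  rw [sierpinski, SimpleGraph.fromRel_adj]
  refine ⟨extF_ne hij, Or.inl ⟨Fin.last n, i, j, hij, ?_, extF_last, extF_last, ?_⟩⟩
  · intro k hk
    have hk' : (k : Nat) < n := by rwa [Fin.lt_def, Fin.val_last] at hk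
    rw [extF_lt hk', extF_lt hk']
  · intro k hk
    exact absurd hk (not_lt_of_ge (Fin.le_last k))

lemma class_ne {s : Fin n → Fin p} {i j : Fin p} (hij : i ≠ j) :
    Quotient.mk (triSetoid p n) (extF s i) ≠ Quotient.mk (triSetoid p n) (extF s j) := by
  rw [Ne, quotient_eq_iff]
  rintro (h | h)
  · exact extF_ne hij h
  · exact ncr_not_of_agree (fun k hk => by rw [extF_lt hk, extF_lt hk]) h

lemma triangle_adj {s : Fin n → Fin p} {i j : Fin p} (hij : i ≠ j) :
    (sierpinskiTriangle p n).Adj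
      (Quotient.mk (triSetoid p n) (extF s i)) (Quotient.mk (triSetoid p n) (extF s j)) :=
  ⟨class_ne hij, extF s i, extF s j, rfl, rfl, ext_adj hij⟩

lemma sier_rel_cases {u v : Fin (n+1) → Fin p}
    (h : ∃ t : Fin (n+1), ∃ i j : Fin p, i ≠ j ∧
      (∀ k, k < t → u k = v k) ∧ u t = i ∧ v t = j ∧
      (∀ k, t < k → u k = j ∧ v k = i)) :
    nonCliqueRel p n u v ∨
      ((∀ k : Fin (n+1), (k : Nat) < n → u k = v k) ∧ u (Fin.last n) ≠ v (Fin.last n)) := by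
  obtain ⟨t, i, j, hij, hpre, hu, hv, htail⟩ := h
  by_cases ht : (t : Nat) < n
  · exact Or.inl ⟨t, ht, i, j, hij, hpre, hu, hv, htail⟩
  · right
    have hlast : t = Fin.last n := eq_last_of_not_lt ht
    subst hlast
    refine ⟨fun k hk => hpre k (lt_lastF hk), ?_⟩
    rw [hu, hv]; exact hij

end Stmt10Aux
end
open Stmt10Aux

theorem stmt10 (p n : Nat) (hp : 1 ≤ p) :
    Nat.card (Quotient (triSetoid p n)) = p * (p ^ n + 1) / 2 ∧
    Nat.card (sierpinskiTriangle p n).edgeSet = (p - 1) * p ^ (n + 1) / 2 := by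
  classical
  haveI : Fintype (Quotient (triSetoid p n)) := Fintype.ofFinite _
  constructor
  · -- vertex count
    set Qmk : (Fin (n+1) → Fin p) → Quotient (triSetoid p n) :=
      Quotient.mk (triSetoid p n) with hQmk
    set S : Finset (Quotient (triSetoid p n)) :=
      Finset.image (fun k : Fin p => Qmk (fun _ => k)) Finset.univ with hS
    have hconst_inj : Function.Injective (fun k : Fin p => Qmk (fun _ => k)) := by
      intro k k' h
      rcases quotient_eq_iff.mp h with h | h
      · exact congrFun h 0
      · obtain ⟨m, hm⟩ := ncr_nonconst h
        exact absurd rfl hm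
    have hScard : S.card = p := by
      rw [hS, Finset.card_image_of_injective _ hconst_inj, Finset.card_univ, Fintype.card_fin]
    have hfib1 : ∀ c ∈ S, (Finset.univ.filter fun u => Qmk u = c).card = 1 := by
      intro c hc
      obtain ⟨k, -, rfl⟩ := Finset.mem_image.mp hc
      rw [Finset.card_eq_one]
      refine ⟨fun _ => k, ?_⟩
      ext u
      simp only [Finset.mem_filter, Finset.mem_univ, true_and, Finset.mem_singleton]
      constructor
      · intro h
        rcases quotient_eq_iff.mp h with h | h
        · exact h
        · obtain ⟨m, hm⟩ := ncr_nonconst (ncr_symm h)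
          exact absurd rfl hm
      · rintro rfl; rfl
    have hfib2 : ∀ c ∈ Finset.univ \ S, (Finset.univ.filter fun u => Qmk u = c).card = 2 := by
      intro c hc
      rw [Finset.mem_sdiff] at hc
      obtain ⟨u, hu⟩ := c.exists_rep
      have hnc : ∃ k, u k ≠ u (Fin.last n) := by
        by_contra hcon
        push_neg at hcon
        have heq : u = fun _ => u (Fin.last n) := funext hcon
        have hu' : Qmk u = c := hu
        exact hc.2 (Finset.mem_image.mpr ⟨u (Fin.last n), Finset.mem_univ _, by rw [← heq]; exact hu'⟩)
      obtain ⟨w, hR⟩ := exists_partner hnc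
      have huw : u ≠ w := by
        rw [ncr_iff] at hR
        obtain ⟨t, -, hne, -, -⟩ := hR
        exact fun h => hne (by rw [h])
      have : (Finset.univ.filter fun x => Qmk x = c) = {u, w} := by
        ext x
        simp only [Finset.mem_filter, Finset.mem_univ, true_and, Finset.mem_insert,
          Finset.mem_singleton]
        rw [← hu]
        constructor
        · intro h
          rcases quotient_eq_iff.mp h with h | h
          · exact Or.inl h
          · exact Or.inr (ncr_unique hR (ncr_symm h)).symm
        · rintro (rfl | rfl)
          · rfl
          · exact (quotient_eq_iff.mpr (Or.inr (ncr_symm hR)))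
      rw [this, Finset.card_pair huw]
    have hsum := Finset.card_eq_sum_card_fiberwise
      (f := Qmk) (s := Finset.univ) (t := Finset.univ) (fun x _ => Finset.mem_univ _)
    rw [← Finset.sum_sdiff (Finset.subset_univ S),
      Finset.sum_congr rfl hfib2, Finset.sum_congr rfl hfib1,
      Finset.sum_const, Finset.sum_const, smul_eq_mul, smul_eq_mul,
      Finset.card_sdiff_of_subset (Finset.subset_univ S), hScard] at hsum
    simp only [Finset.card_univ] at hsum
    have hαcard : Fintype.card (Fin (n+1) → Fin p) = p ^ (n+1) := by simp
    have hQge : p ≤ Fintype.card (Quotient (triSetoid p n)) :=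
      le_trans (le_of_eq hScard.symm) (Finset.card_le_univ S)
    rw [hαcard] at hsum
    rw [Nat.card_eq_fintype_card]
    have hpow : p ^ (n+1) = p * p ^ n := by ring
    have hfin : p * (p ^ n + 1) = p * p ^ n + p := by ring
    omega
  · -- edge count
    set Qmk : (Fin (n+1) → Fin p) → Quotient (triSetoid p n) :=
      Quotient.mk (triSetoid p n) with hQmk
    have key : ∀ (s : Fin n → Fin p) (z : Sym2 (Fin p)), ¬ z.IsDiag →
        Sym2.map (fun i => Qmk (extF s i)) z ∈ (sierpinskiTriangle p n).edgeSet := by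
      intro s z
      induction z using Sym2.ind with
      | _ i j =>
        intro hz
        rw [Sym2.mk_isDiag_iff] at hz
        rw [Sym2.map_pair_eq, SimpleGraph.mem_edgeSet]
        exact triangle_adj hz
    let Φ : ((Fin n → Fin p) × {z : Sym2 (Fin p) // ¬ z.IsDiag}) →
        (sierpinskiTriangle p n).edgeSet :=
      fun x => ⟨Sym2.map (fun i => Qmk (extF x.1 i)) x.2.1, key x.1 x.2.1 x.2.2⟩
    have hinj : Function.Injective Φ := by
      rintro ⟨s, z, hz⟩ ⟨s', z', hz'⟩ h
      simp only [Φ, Subtype.mk.injEq] at h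
      revert hz h
      induction z using Sym2.ind with
      | _ i j =>
        revert hz'
        induction z' using Sym2.ind with
        | _ i' j' =>
          intro hz' hz h
          rw [Sym2.mk_isDiag_iff] at hz hz'
          rw [Sym2.map_pair_eq, Sym2.map_pair_eq, Sym2.eq_iff] at h
          simp only [Prod.mk.injEq, Subtype.mk.injEq]
          rcases h with ⟨h1, h2⟩ | ⟨h1, h2⟩
          · obtain ⟨hs, ha, hb⟩ := ext_class_inj hz h1 h2
            exact ⟨hs, by rw [ha, hb]⟩
          · obtain ⟨hs, ha, hb⟩ := ext_class_inj hz h1 h2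
            exact ⟨hs, by rw [ha, hb, Sym2.eq_swap]⟩
    have hsurj : Function.Surjective Φ := by
      rintro ⟨e, he⟩
      revert he
      induction e using Sym2.ind with
      | _ x y =>
        intro he
        rw [SimpleGraph.mem_edgeSet] at he
        obtain ⟨hne, u, v, hu, hv, hadj⟩ := he
        rw [sierpinski, SimpleGraph.fromRel_adj] at hadj
        obtain ⟨-, hrel | hrel⟩ := hadj
        · rcases sier_rel_cases hrel with hncr | ⟨hagree, hlast⟩
          · exact absurd (hu ▸ hv ▸ quotient_eq_iff.mpr (Or.inr hncr)) hne
          · set s : Fin n → Fin p := fun m => u (Fin.castSucc m) with hsdef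
            have hu' : u = extF s (u (Fin.last n)) := eq_extF u
            have hv' : v = extF s (v (Fin.last n)) := by
              funext k
              by_cases hk : (k : Nat) < n
              · rw [extF_lt hk]
                have hck : Fin.castSucc ⟨(k : Nat), hk⟩ = k := Fin.ext rfl
                show v k = u (Fin.castSucc ⟨(k : Nat), hk⟩)
                rw [hck]
                exact (hagree k hk).symm
              · rw [eq_last_of_not_lt hk, extF_last]
            refine ⟨⟨s, ⟨s(u (Fin.last n), v (Fin.last n)), by
              rw [Sym2.mk_isDiag_iff]; exact hlast⟩⟩, ?_⟩
            apply Subtype.ext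
            simp only [Φ]
            have hux : Qmk u = x := hu
            have hvy : Qmk v = y := hv
            rw [Sym2.map_pair_eq, ← hu', ← hv', hux, hvy]
        · rcases sier_rel_cases hrel with hncr | ⟨hagree, hlast⟩
          · exact absurd (hu ▸ hv ▸ (quotient_eq_iff.mpr (Or.inr (ncr_symm hncr)))) hne
          · set s : Fin n → Fin p := fun m => v (Fin.castSucc m) with hsdef
            have hv' : v = extF s (v (Fin.last n)) := eq_extF v
            have hu' : u = extF s (u (Fin.last n)) := by
              funext k
              by_cases hk : (k : Nat) < n
              · rw [extF_lt hk]
                have hck : Fin.castSucc ⟨(k : Nat), hk⟩ = k := Fin.ext rfl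
                show u k = v (Fin.castSucc ⟨(k : Nat), hk⟩)
                rw [hck]
                exact (hagree k hk).symm
              · rw [eq_last_of_not_lt hk, extF_last]
            refine ⟨⟨s, ⟨s(v (Fin.last n), u (Fin.last n)), by
              rw [Sym2.mk_isDiag_iff]; exact hlast⟩⟩, ?_⟩
            apply Subtype.ext
            simp only [Φ]
            have hux : Qmk u = x := hu
            have hvy : Qmk v = y := hv
            rw [Sym2.map_pair_eq, ← hv', ← hu', hvy, hux, Sym2.eq_swap]
    have hcardI : Nat.card ((Fin n → Fin p) × {z : Sym2 (Fin p) // ¬ z.IsDiag})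
        = p ^ n * (p.choose 2) := by
      rw [Nat.card_eq_fintype_card, Fintype.card_prod, Sym2.card_subtype_not_diag,
        Fintype.card_fin]
      congr 1
      simp
    rw [← Nat.card_congr (Equiv.ofBijective Φ ⟨hinj, hsurj⟩), hcardI, Nat.choose_two_right]
    have hd : 2 ∣ p * (p - 1) := (Nat.even_mul_pred_self p).two_dvd
    rw [← Nat.mul_div_assoc _ hd]
    congr 1
    have h1 : p - 1 + 1 = p := Nat.succ_pred_eq_of_pos hp
    rw [pow_succ]
    cases' Nat.exists_eq_add_of_le hp with m hm
    subst hm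
    ring_nf
end

section
/- For every integer n ≥ 0, every minimum feedback vertex set of the Sierpiński triangle graph Ŝ_3^n contains at most one of the three extreme vertices 0̂, 1̂, 2̂. -/
open SimpleGraph

theorem small_acyclic {V : Type*} (G : SimpleGraph V) (x y : V)
    (h : ∀ v : V, v = x ∨ v = y) : G.IsAcyclic := by
  classical
  intro v c hc
  have h3 : 3 ≤ c.length := hc.three_le_length
  have hnd : c.support.tail.Nodup := hc.2
  have hlen : c.support.tail.length = c.length := by
    have := c.length_support
    simp [List.length_tail, this]
  have hcard := List.toFinset_card_of_nodup hnd
  have hsub : c.support.tail.toFinset ⊆ {x, y} := by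
    intro a ha
    rcases h a with rfl | rfl <;> simp
  have := Finset.card_le_card hsub
  have hxy : ({x, y} : Finset V).card ≤ 2 := Finset.card_insert_le _ _ |>.trans (by simp)
  omega

def NoCycleIn {V : Type*} (G : SimpleGraph V) (S : Set V) : Prop :=
  ∀ (v : V) (c : G.Walk v v), c.IsCycle → ¬ (∀ w ∈ c.support, w ∈ S)

theorem lift_walk {V W : Type*} {G : SimpleGraph V} {H : SimpleGraph W}
    (F : G →g H) (hinj : Function.Injective F)
    (hrefl : ∀ u v, H.Adj (F u) (F v) → G.Adj u v) :
    ∀ {u' v' : W} (p : H.Walk u' v'), (∀ w ∈ p.support, w ∈ Set.range F) →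
    ∀ {u v : V} (hu : F u = u') (hv : F v = v'),
      ∃ q : G.Walk u v, q.map F = p.copy hu.symm hv.symm := by
  intro u' v' p
  induction p with
  | nil =>
    intro hp u v hu hv
    subst hu
    have : v = u := hinj hv
    subst this
    exact ⟨Walk.nil, rfl⟩
  | @cons a m c h p' ih =>
    intro hp u v hu hv
    subst hu
    subst hv
    obtain ⟨w, hw⟩ : m ∈ Set.range F := hp m (by simp)
    subst hw
    have hadj : G.Adj u w := hrefl _ _ h
    obtain ⟨q', hq'⟩ := ih (fun x hx => hp x (by simp [hx])) rfl rfl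
    rw [Walk.copy_rfl_rfl] at hq'
    exact ⟨Walk.cons hadj q', by rw [Walk.copy_rfl_rfl, Walk.map_cons, hq']⟩

/-- The inclusion hom from an induced subgraph. -/
def inclHom {V : Type*} (G : SimpleGraph V) (S : Set V) : G.induce S →g G where
  toFun := fun w => ↑w
  map_rel' := by
    rintro ⟨a, ha⟩ ⟨b, hb⟩ hab
    exact hab

theorem noCycleIn_iff {V : Type*} {G : SimpleGraph V} {S : Set V} :
    NoCycleIn G S ↔ (G.induce S).IsAcyclic := by
  constructor
  · intro hnc v c hc
    have hinj : Function.Injective (inclHom G S) := Subtype.val_injective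
    have hcyc : (c.map (inclHom G S)).IsCycle := hc.map hinj
    apply hnc _ _ hcyc
    intro w hw
    rw [Walk.support_map, List.mem_map] at hw
    obtain ⟨x, _, rfl⟩ := hw
    exact x.2
  · intro hac v c hc hsupp
    have hv : v ∈ S := hsupp v c.start_mem_support
    have hinj : Function.Injective (inclHom G S) := Subtype.val_injective
    have hrefl : ∀ u w : ↑S, G.Adj (inclHom G S u) (inclHom G S w) → (G.induce S).Adj u w := by
      rintro ⟨a, ha⟩ ⟨b, hb⟩ hab
      exact hab
    obtain ⟨q, hq⟩ := lift_walk (inclHom G S) hinj hrefl c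
      (fun w hw => ⟨⟨w, hsupp w hw⟩, rfl⟩) (u := ⟨v, hv⟩) (v := ⟨v, hv⟩) rfl rfl
    replace hq : q.map (inclHom G S) = c := hq
    have : q.IsCycle := by
      rw [← Walk.map_isCycle_iff_of_injective hinj, hq]
      exact hc
    exact hac _ this

theorem noCycleIn_transfer {V W : Type*} {G : SimpleGraph V} {H : SimpleGraph W}
    (F : G →g H) (hinj : Function.Injective F)
    (hrefl : ∀ u v, H.Adj (F u) (F v) → G.Adj u v)
    {S : Set W} {T : Set V} (hS : ∀ w ∈ S, ∃ v ∈ T, F v = w)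
    (hT : NoCycleIn G T) : NoCycleIn H S := by
  intro v' c hc hsupp
  obtain ⟨v, hvT, hv⟩ := hS v' (hsupp v' c.start_mem_support)
  obtain ⟨q, hq⟩ := lift_walk F hinj hrefl c
    (fun w hw => by obtain ⟨x, hxT, hx⟩ := hS w (hsupp w hw); exact ⟨x, hx⟩) hv hv
  have hqc : q.IsCycle := by
    rw [← Walk.map_isCycle_iff_of_injective hinj, hq]
    simpa using hc
  apply hT _ _ hqc
  intro w hw
  have : F w ∈ c.support := by
    have : F w ∈ (q.map F).support := by
      rw [Walk.support_map]
      exact List.mem_map_of_mem hw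
    rw [hq] at this
    simpa using this
  obtain ⟨x, hxT, hx⟩ := hS (F w) (hsupp _ this)
  rwa [← hinj hx]

theorem walk_hits_inter {V : Type*} {G : SimpleGraph V} {S1 S2 : Set V}
    (hedge : ∀ u v, u ∈ S1 ∪ S2 → v ∈ S1 ∪ S2 → G.Adj u v →
      (u ∈ S1 ∧ v ∈ S1) ∨ (u ∈ S2 ∧ v ∈ S2)) :
    ∀ {x y : V} (p : G.Walk x y), (∀ w ∈ p.support, w ∈ S1 ∪ S2) →
      x ∈ S1 \ S2 → y ∈ S2 \ S1 →
      ∃ w ∈ p.support, w ∈ S1 ∩ S2 := by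
  intro x y p
  induction p with
  | nil =>
    intro _ hx hy
    exact absurd hy.1 hx.2
  | @cons a b c hadj p ih =>
    intro hsupp hx hy
    have hb : b ∈ S1 ∪ S2 := hsupp b (by simp)
    have hb1 : b ∈ S1 := by
      rcases hedge a b (Or.inl hx.1) hb hadj with h | h
      · exact h.2
      · exact absurd h.1 hx.2
    by_cases hb2 : b ∈ S2
    · exact ⟨b, by simp, hb1, hb2⟩
    · obtain ⟨w, hw, hw2⟩ := ih (fun w hw => hsupp w (by simp [hw])) ⟨hb1, hb2⟩ hy
      exact ⟨w, by simp [hw], hw2⟩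

theorem mem_support_tail_of_closed {V : Type*} {G : SimpleGraph V} {v x : V}
    (c : G.Walk v v) (hnil : ¬ c.Nil) (hx : x ∈ c.support) : x ∈ c.support.tail := by
  rcases (Walk.mem_support_iff c).1 hx with rfl | h
  · rw [← Walk.support_tail_of_not_nil c hnil]
    exact Walk.end_mem_support _
  · exact h

theorem glue_noCycle {V : Type*} {G : SimpleGraph V} {S1 S2 : Set V} {z : V}
    (h1 : NoCycleIn G S1) (h2 : NoCycleIn G S2)
    (hinter : S1 ∩ S2 ⊆ {z})
    (hedge : ∀ u v, u ∈ S1 ∪ S2 → v ∈ S1 ∪ S2 → G.Adj u v →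
      (u ∈ S1 ∧ v ∈ S1) ∨ (u ∈ S2 ∧ v ∈ S2)) :
    NoCycleIn G (S1 ∪ S2) := by
  classical
  intro v0 c hc hsupp
  by_cases hall1 : ∀ w ∈ c.support, w ∈ S1
  · exact h1 _ c hc hall1
  by_cases hall2 : ∀ w ∈ c.support, w ∈ S2
  · exact h2 _ c hc hall2
  push_neg at hall1 hall2
  obtain ⟨u, huS, hu1⟩ := hall1
  obtain ⟨w, hwS, hw2⟩ := hall2
  have hu2 : u ∈ S2 := (hsupp u huS).resolve_left hu1
  have hw1 : w ∈ S1 := (hsupp w hwS).resolve_right hw2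
  have hnil : ¬ c.Nil := by
    rw [Walk.nil_iff_length_eq]
    have := hc.three_le_length
    omega
  -- rotate the cycle to start at w
  set c' := c.rotate w hwS with hc'
  have hc'cyc : c'.IsCycle := hc.rotate hwS
  have hrot := Walk.support_rotate c w hwS
  have hsupp' : ∀ x ∈ c'.support, x ∈ S1 ∪ S2 := by
    intro x hx
    rcases (Walk.mem_support_iff _).1 hx with rfl | hx
    · exact Or.inl hw1
    · exact hsupp x (List.mem_of_mem_tail (hrot.mem_iff.1 hx))
  have huc' : u ∈ c'.support := by
    rw [Walk.mem_support_iff]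
    right
    rw [hrot.mem_iff]
    exact mem_support_tail_of_closed c hnil huS
  set p := c'.takeUntil u huc' with hp
  set q := c'.dropUntil u huc' with hq
  have hspec : p.append q = c' := Walk.take_spec c' huc'
  have hpsupp : ∀ x ∈ p.support, x ∈ S1 ∪ S2 :=
    fun x hx => hsupp' x (Walk.support_takeUntil_subset c' huc' hx)
  have hqsupp : ∀ x ∈ q.support, x ∈ S1 ∪ S2 :=
    fun x hx => hsupp' x (Walk.support_dropUntil_subset c' huc' hx)
  obtain ⟨z1, hz1p, hz1⟩ := walk_hits_inter hedge p hpsupp ⟨hw1, hw2⟩ ⟨hu2, hu1⟩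
  obtain ⟨z2, hz2q, hz2⟩ := walk_hits_inter hedge q.reverse
    (fun x hx => hqsupp x (by rwa [Walk.support_reverse, List.mem_reverse] at hx))
    ⟨hw1, hw2⟩ ⟨hu2, hu1⟩
  have hz1z : z1 = z := hinter hz1
  have hz2z : z2 = z := hinter hz2
  have hz12 : z1 = z2 := hz1z.trans hz2z.symm
  subst hz12
  have hz1w : z1 ≠ w := fun h => hw2 (h ▸ hz1.2)
  have hz1u : z1 ≠ u := fun h => hu1 (h ▸ hz1.1)
  have hz1pt : z1 ∈ p.support.tail := by
    have := (Walk.mem_support_iff p).1 hz1p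
    rcases this with h | h
    · exact absurd h hz1w
    · exact h
  have hz2q' : z1 ∈ q.support := by
    rwa [Walk.support_reverse, List.mem_reverse] at hz2q
  have hz2qt : z1 ∈ q.support.tail := by
    have := (Walk.mem_support_iff q).1 hz2q'
    rcases this with h | h
    · exact absurd h hz1u
    · exact h
  have hsuppeq : c'.support = p.support ++ q.support.tail := by
    rw [← hspec, Walk.support_append]
  have htaileq : c'.support.tail = p.support.tail ++ q.support.tail := by
    have h1 : c'.support = w :: c'.support.tail := Walk.support_eq_cons c'
    have h2 : p.support = w :: p.support.tail := Walk.support_eq_cons p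
    rw [h2] at hsuppeq
    simp only [List.cons_append] at hsuppeq
    rw [h1] at hsuppeq
    have := congrArg List.tail hsuppeq
    simpa using this
  have hnd : c'.support.tail.Nodup := hc'cyc.2
  rw [htaileq] at hnd
  exact (List.disjoint_of_nodup_append hnd) hz1pt hz2qt



namespace Stmt11

abbrev W (n : ℕ) := Fin (n+1) → Fin 3
abbrev Vt (n : ℕ) := Quotient (triSetoid 3 n)
abbrev mkQ (n : ℕ) : W n → Vt n := Quotient.mk (triSetoid 3 n)
abbrev ncr (n : ℕ) := nonCliqueRel 3 n
abbrev cnst (n : ℕ) (c : Fin 3) : W n := fun _ => c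
theorem snoc_zero {n : ℕ} (s : Fin (n+1) → Fin 3) (i : Fin 3) :
    (Fin.snoc s i : Fin (n+2) → Fin 3) 0 = s 0 := by
  have h : (0 : Fin (n+2)) = Fin.castSucc 0 := rfl
  rw [h, Fin.snoc_castSucc]

theorem ncr_symm {n : ℕ} {u v : W n} (h : ncr n u v) : ncr n v u := by
  obtain ⟨t, ht, i, j, hij, hlt, hut, hvt, hgt⟩ := h
  exact ⟨t, ht, j, i, hij.symm, fun k hk => (hlt k hk).symm, hvt, hut,
    fun k hk => ⟨(hgt k hk).2, (hgt k hk).1⟩⟩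

theorem ncr_unique {n : ℕ} {u v w : W n} (h1 : ncr n u v) (h2 : ncr n u w) : v = w := by
  obtain ⟨t1, ht1, i1, j1, hij1, hlt1, hut1, hvt1, hgt1⟩ := h1
  obtain ⟨t2, ht2, i2, j2, hij2, hlt2, hut2, hvt2, hgt2⟩ := h2
  have hlast1 : t1 < Fin.last n := by
    simpa [Fin.lt_iff_val_lt_val] using ht1
  have hlast2 : t2 < Fin.last n := by
    simpa [Fin.lt_iff_val_lt_val] using ht2
  have hj1 : u (Fin.last n) = j1 := (hgt1 _ hlast1).1
  have hj2 : u (Fin.last n) = j2 := (hgt2 _ hlast2).1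
  have htt : t1 = t2 := by
    rcases lt_trichotomy t1 t2 with h | h | h
    · exfalso
      have h1' : u t2 = j1 := (hgt1 _ h).1
      exact hij2 (by rw [← hut2, h1', hj1.symm.trans hj2])
    · exact h
    · exfalso
      have h2' : u t1 = j2 := (hgt2 _ h).1
      exact hij1 (by rw [← hut1, h2', hj2.symm.trans hj1])
  subst htt
  have hii : i1 = i2 := hut1.symm.trans hut2
  have hjj : j1 = j2 := hj1.symm.trans hj2
  funext k
  rcases lt_trichotomy k t1 with h | h | h
  · rw [← hlt1 k h, hlt2 k h]
  · subst h; rw [hvt1, hvt2, hjj]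
  · rw [(hgt1 k h).2, (hgt2 k h).2, hii]

theorem Req {n : ℕ} : Equivalence (fun u v : W n => u = v ∨ ncr n u v) := by
  constructor
  · intro u; exact Or.inl rfl
  · rintro u v (rfl | h)
    · exact Or.inl rfl
    · exact Or.inr (ncr_symm h)
  · rintro u v w (rfl | h1) (rfl | h2)
    · exact Or.inl rfl
    · exact Or.inr h2
    · exact Or.inr h1
    · exact Or.inl (ncr_unique (ncr_symm h1) h2)

theorem mk_eq_iff {n : ℕ} {u v : W n} :
    mkQ n u = mkQ n v ↔ u = v ∨ ncr n u v := by
  rw [Quotient.eq]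
  show Relation.EqvGen (ncr n) u v ↔ _
  constructor
  · intro h
    induction h with
    | rel x y h => exact Or.inr h
    | refl => exact Or.inl rfl
    | symm x y h ih => exact Req.symm ih
    | trans x y z h1 h2 ih1 ih2 => exact Req.trans ih1 ih2
  · rintro (rfl | h)
    · exact Relation.EqvGen.refl u
    · exact Relation.EqvGen.rel _ _ h

theorem ncr_const {n : ℕ} {u : W n} {c : Fin 3} (h : ncr n u (fun _ => c)) : False := by
  obtain ⟨t, ht, i, j, hij, hlt, hut, hvt, hgt⟩ := h
  have hlast : t < Fin.last n := by simpa [Fin.lt_iff_val_lt_val] using ht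
  exact hij (hvt ▸ (hgt _ hlast).2 ▸ rfl)

theorem eq_const_of_mk_eq {n : ℕ} {u : W n} {c : Fin 3}
    (h : mkQ n u = mkQ n (fun _ => c)) : u = fun _ => c := by
  rcases mk_eq_iff.1 h with h | h
  · exact h
  · exact absurd h ncr_const

/-- Helper: a one-sided witness of `sierpinski` adjacency gives a clique-edge form. -/
theorem rel_case {n : ℕ} {u v : W n} {x y : Vt n} (hxy : x ≠ y)
    (hu : mkQ n u = x) (hv : mkQ n v = y)
    (h : ∃ t : Fin (n+1), ∃ i j : Fin 3, i ≠ j ∧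
      (∀ k, k < t → u k = v k) ∧ u t = i ∧ v t = j ∧
      (∀ k, t < k → u k = j ∧ v k = i)) :
    ∃ s : Fin n → Fin 3, ∃ i j : Fin 3,
      i ≠ j ∧ x = mkQ n (Fin.snoc s i) ∧ y = mkQ n (Fin.snoc s j) := by
  obtain ⟨t, i, j, hij, hlt, hut, hvt, hgt⟩ := h
  rcases Nat.lt_or_ge (t : ℕ) n with htn | htn
  · exact absurd (hu.symm.trans ((mk_eq_iff.2 (Or.inr ⟨t, htn, i, j, hij, hlt, hut, hvt, hgt⟩)).trans hv)) hxy
  · have htl : t = Fin.last n := Fin.ext (le_antisymm (Nat.lt_succ_iff.1 t.isLt) htn)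
    subst htl
    refine ⟨fun k => u k.castSucc, i, j, hij, ?_, ?_⟩
    · rw [← hu]
      congr 1
      funext k
      refine Fin.lastCases ?_ (fun k => ?_) k
      · simpa using hut
      · simp
    · rw [← hv]
      congr 1
      funext k
      refine Fin.lastCases ?_ (fun k => ?_) k
      · simpa using hvt
      · simpa using (hlt k.castSucc (Fin.castSucc_lt_last k)).symm

/-- Adjacency in the Sierpinski triangle graph is witnessed by clique edges. -/
theorem adj_iff {n : ℕ} {x y : Vt n} :
    (sierpinskiTriangle 3 n).Adj x y ↔ x ≠ y ∧ ∃ s : Fin n → Fin 3, ∃ i j : Fin 3,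
      i ≠ j ∧ x = mkQ n (Fin.snoc s i) ∧ y = mkQ n (Fin.snoc s j) := by
  constructor
  · rintro ⟨hxy, u, v, hu, hv, huv⟩
    refine ⟨hxy, ?_⟩
    rcases huv.2 with h | h
    · exact rel_case hxy hu hv h
    · obtain ⟨s, i, j, hij, h1, h2⟩ := rel_case hxy.symm hv hu h
      exact ⟨s, j, i, hij.symm, h2, h1⟩
  · rintro ⟨hxy, s, i, j, hij, hx, hy⟩
    refine ⟨hxy, Fin.snoc s i, Fin.snoc s j, hx.symm, hy.symm, ?_, ?_⟩
    · intro h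
      exact hxy (hx.trans (h ▸ hy.symm))
    · left
      refine ⟨Fin.last n, i, j, hij, ?_, by simp, by simp, ?_⟩
      · intro k hk
        have : k ≠ Fin.last n := Fin.ne_of_lt hk
        obtain ⟨k', rfl⟩ := Fin.exists_castSucc_eq.2 this
        simp
      · intro k hk
        exact absurd hk (not_lt.2 (Fin.le_last k))


/-- A graph containing a triangle is not acyclic. -/
theorem not_acyclic_of_triangle {V : Type*} {G : SimpleGraph V} {a b c : V}
    (hab : G.Adj a b) (hbc : G.Adj b c) (hca : G.Adj c a) : ¬ G.IsAcyclic := by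
  intro hG
  have h1 := hab.ne
  have h2 := hbc.ne
  have h3 := hca.ne
  have h4 : a ≠ c := fun h => h3 h.symm
  have hcyc : (Walk.cons hab (Walk.cons hbc (Walk.cons hca Walk.nil))).IsCycle := by
    simp [Walk.isCycle_def, Walk.isTrail_def, Sym2.eq_iff, List.nodup_cons, h1, h2, h3, h4,
      h1.symm, h2.symm, h3.symm, h4.symm]
  exact hG _ hcyc

theorem triangle_distinct {n : ℕ} {s : Fin n → Fin 3} {a b : Fin 3}
    (h : mkQ n (Fin.snoc s a) = mkQ n (Fin.snoc s b)) : a = b := by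
  rcases mk_eq_iff.1 h with h | h
  · simpa using congrFun h (Fin.last n)
  · exfalso
    obtain ⟨t, ht, i, j, hij, hlt, hut, hvt, hgt⟩ := h
    have hne : t ≠ Fin.last n := by
      intro hh
      rw [hh] at ht
      simp [Fin.last] at ht
    obtain ⟨t', rfl⟩ := Fin.exists_castSucc_eq.2 hne
    apply hij
    rw [← hut, ← hvt]
    simp

theorem triangle_adj {n : ℕ} {s : Fin n → Fin 3} {a b : Fin 3} (hab : a ≠ b) :
    (sierpinskiTriangle 3 n).Adj (mkQ n (Fin.snoc s a)) (mkQ n (Fin.snoc s b)) := by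
  refine adj_iff.2 ⟨fun h => hab (triangle_distinct h), s, a, b, hab, rfl, rfl⟩

/-- Every feedback vertex set meets every bottom triangle. -/
theorem triangle_hit {n : ℕ} {X : Set (Vt n)}
    (hX : IsFeedbackVertexSet (sierpinskiTriangle 3 n) X) (s : Fin n → Fin 3) :
    ∃ c : Fin 3, mkQ n (Fin.snoc s c) ∈ X := by
  by_contra h
  push_neg at h
  set G := sierpinskiTriangle 3 n with hG
  let v0 : (Xᶜ : Set (Vt n)) := ⟨mkQ n (Fin.snoc s 0), h 0⟩
  let v1 : (Xᶜ : Set (Vt n)) := ⟨mkQ n (Fin.snoc s 1), h 1⟩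
  let v2 : (Xᶜ : Set (Vt n)) := ⟨mkQ n (Fin.snoc s 2), h 2⟩
  have a01 : (G.induce Xᶜ).Adj v0 v1 := triangle_adj (by decide)
  have a12 : (G.induce Xᶜ).Adj v1 v2 := triangle_adj (by decide)
  have a20 : (G.induce Xᶜ).Adj v2 v0 := triangle_adj (by decide)
  exact not_acyclic_of_triangle a01 a12 a20 hX

open Classical in
/-- Counting: an FVS containing two distinct extreme vertices has size > (3^n+1)/2. -/
theorem count_lower {n : ℕ} {X : Finset (Vt n)}
    (hX : IsFeedbackVertexSet (sierpinskiTriangle 3 n) ↑X)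
    {a b : Fin 3} {A B : Vt n} (hA : A ∈ X) (hB : B ∈ X) (hAB : A ≠ B)
    (hAa : A = mkQ n (fun _ => a)) (hBb : B = mkQ n (fun _ => b)) :
    3 ^ n + 2 ≤ 2 * X.card := by
  -- choose a hit vertex for each bottom triangle
  have hhit := fun s => triangle_hit hX s
  choose c hc using hhit
  set F : (Fin n → Fin 3) → Vt n := fun s => mkQ n (Fin.snoc s (c s)) with hF
  have hFX : ∀ s : Fin n → Fin 3, s ∈ (Finset.univ : Finset (Fin n → Fin 3)) → F s ∈ X := by
    intro s _; exact hc s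
  have hcard := Finset.card_eq_sum_card_fiberwise hFX
  have hcu : (Finset.univ : Finset (Fin n → Fin 3)).card = 3 ^ n := by
    simp [Finset.card_univ]
  -- fiber bounds
  have hfib2 : ∀ v ∈ X, (Finset.univ.filter (fun s => F s = v)).card ≤ 2 := by
    intro v _
    have : (Finset.univ.filter (fun s => F s = v)).card ≤ (Finset.univ : Finset Bool).card := by
      apply Finset.card_le_card_of_injOn (fun s => decide (Fin.snoc s (c s) = Quotient.out v))
      · intro s _; exact Finset.mem_univ _
      · intro s1 hs1 s2 hs2 heq
        simp only [Finset.mem_coe, Finset.mem_filter] at hs1 hs2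
        have h1 : mkQ n (Fin.snoc s1 (c s1)) = mkQ n (Quotient.out v) :=
          hs1.2.trans (Quotient.out_eq v).symm
        have h2 : mkQ n (Fin.snoc s2 (c s2)) = mkQ n (Quotient.out v) :=
          hs2.2.trans (Quotient.out_eq v).symm
        simp only [decide_eq_decide] at heq
        by_cases hd : Fin.snoc s1 (c s1) = Quotient.out v
        · have hd2 : Fin.snoc s2 (c s2) = Quotient.out v := heq.1 hd
          have := hd.trans hd2.symm
          have := congrArg Fin.init this
          simpa [Fin.init_snoc] using this
        · have hd2 : ¬ (Fin.snoc s2 (c s2) = Quotient.out v) := fun hh => hd (heq.2 hh)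
          have hn1 : ncr n (Quotient.out v) (Fin.snoc s1 (c s1)) := by
            rcases mk_eq_iff.1 h1 with h | h
            · exact absurd h hd
            · exact ncr_symm h
          have hn2 : ncr n (Quotient.out v) (Fin.snoc s2 (c s2)) := by
            rcases mk_eq_iff.1 h2 with h | h
            · exact absurd h hd2
            · exact ncr_symm h
          have := ncr_unique hn1 hn2
          have := congrArg Fin.init this
          simpa [Fin.init_snoc] using this
    simpa using this
  have hfibA : (Finset.univ.filter (fun s => F s = A)).card ≤ 1 := by
    apply Finset.card_le_one.2
    intro s1 hs1 s2 hs2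
    simp only [Finset.mem_filter] at hs1 hs2
    have h1 : Fin.snoc s1 (c s1) = fun _ => a :=
      eq_const_of_mk_eq (hs1.2.trans hAa)
    have h2 : Fin.snoc s2 (c s2) = fun _ => a :=
      eq_const_of_mk_eq (hs2.2.trans hAa)
    have := congrArg Fin.init (h1.trans h2.symm)
    simpa [Fin.init_snoc] using this
  have hfibB : (Finset.univ.filter (fun s => F s = B)).card ≤ 1 := by
    apply Finset.card_le_one.2
    intro s1 hs1 s2 hs2
    simp only [Finset.mem_filter] at hs1 hs2
    have h1 : Fin.snoc s1 (c s1) = fun _ => b :=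
      eq_const_of_mk_eq (hs1.2.trans hBb)
    have h2 : Fin.snoc s2 (c s2) = fun _ => b :=
      eq_const_of_mk_eq (hs2.2.trans hBb)
    have := congrArg Fin.init (h1.trans h2.symm)
    simpa [Fin.init_snoc] using this
  -- sum bound
  have hsub : ({A, B} : Finset (Vt n)) ⊆ X := by
    intro x hx
    rcases Finset.mem_insert.1 hx with rfl | hx
    · exact hA
    · rw [Finset.mem_singleton.1 hx]; exact hB
  have hbound : ∑ v ∈ X, (Finset.univ.filter (fun s => F s = v)).card
      ≤ 2 * (X.card - 2) + 2 := by
    rw [← Finset.sum_sdiff hsub]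
    have e1 : ∑ v ∈ X \ {A, B}, (Finset.univ.filter (fun s => F s = v)).card
        ≤ 2 * (X.card - 2) := by
      calc ∑ v ∈ X \ {A, B}, (Finset.univ.filter (fun s => F s = v)).card
          ≤ ∑ v ∈ X \ {A, B}, 2 := by
            apply Finset.sum_le_sum
            intro v hv
            exact hfib2 v (Finset.mem_sdiff.1 hv).1
        _ = 2 * (X.card - 2) := by
            rw [Finset.sum_const, Finset.card_sdiff_of_subset hsub, smul_eq_mul, mul_comm]
            congr 1
            simp [Finset.card_pair hAB]
    have e2 : ∑ v ∈ ({A, B} : Finset (Vt n)), (Finset.univ.filter (fun s => F s = v)).card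
        ≤ 2 := by
      rw [Finset.sum_pair hAB]
      omega
    omega
  have h2X : 2 ≤ X.card := by
    calc 2 = ({A, B} : Finset (Vt n)).card := (Finset.card_pair hAB).symm
      _ ≤ X.card := Finset.card_le_card hsub
  omega


/-! ### The three sub-copies -/

theorem ncr_cons {n : ℕ} {a : Fin 3} {u v : W n} (h : ncr n u v) :
    ncr (n+1) (Fin.cons a u) (Fin.cons a v) := by
  obtain ⟨t, ht, i, j, hij, hlt, hut, hvt, hgt⟩ := h
  refine ⟨t.succ, by simpa using ht, i, j, hij, ?_, by simpa using hut, by simpa using hvt, ?_⟩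
  · intro k hk
    rcases Fin.eq_zero_or_eq_succ k with rfl | ⟨k', rfl⟩
    · simp
    · have : k' < t := by
        simpa [Fin.succ_lt_succ_iff] using hk
      simpa using hlt k' this
  · intro k hk
    rcases Fin.eq_zero_or_eq_succ k with rfl | ⟨k', rfl⟩
    · exact absurd hk (by simp [Fin.lt_iff_val_lt_val])
    · have : t < k' := by
        simpa [Fin.succ_lt_succ_iff] using hk
      simpa using hgt k' this

/-- The copy map: prepend letter `a`. -/
def phi {n : ℕ} (a : Fin 3) : Vt n → Vt (n+1) :=
  Quotient.lift (fun u => mkQ (n+1) (Fin.cons a u)) (by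
    intro u v h
    have huv : mkQ n u = mkQ n v := Quotient.sound h
    rcases mk_eq_iff.1 huv with rfl | h'
    · rfl
    · exact mk_eq_iff.2 (Or.inr (ncr_cons h')))

theorem phi_mk {n : ℕ} (a : Fin 3) (u : W n) :
    phi a (mkQ n u) = mkQ (n+1) (Fin.cons a u) := rfl

theorem cons_head_ne_aux {n : ℕ} {a : Fin 3} {u : W n} {w : W (n+1)}
    (h : ncr (n+1) (Fin.cons a u) w) (hne : w 0 ≠ a) :
    Fin.cons a u = (Fin.cons a (cnst n (w 0)) : W (n+1)) ∧ w = (Fin.cons (w 0) (cnst n a) : W (n+1)) := by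
  obtain ⟨t, ht, i, j, hij, hlt, hut, hvt, hgt⟩ := h
  have ht0 : t = 0 := by
    by_contra h0
    have h0' : (0 : Fin (n+2)) < t := Fin.pos_of_ne_zero h0
    have := hlt 0 h0'
    simp only [Fin.cons_zero] at this
    exact hne this.symm
  subst ht0
  have hia : i = a := by simpa using hut.symm
  subst hia
  have hjw : j = w 0 := hvt.symm
  subst hjw
  constructor
  · funext k
    rcases Fin.eq_zero_or_eq_succ k with rfl | ⟨k', rfl⟩
    · simp
    · have := (hgt k'.succ (Fin.succ_pos k')).1
      simpa using this
  · funext k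
    rcases Fin.eq_zero_or_eq_succ k with rfl | ⟨k', rfl⟩
    · simp
    · have := (hgt k'.succ (Fin.succ_pos k')).2
      simpa using this

theorem phi_inj {n : ℕ} (a : Fin 3) : Function.Injective (phi (n := n) a) := by
  intro x y
  refine Quotient.inductionOn₂ x y ?_
  intro u v h
  rw [phi_mk, phi_mk] at h
  rcases mk_eq_iff.1 h with h | h
  · have : u = v := by
      funext k
      have := congrFun h k.succ
      simpa using this
    rw [this]
  · obtain ⟨t, ht, i, j, hij, hlt, hut, hvt, hgt⟩ := h
    rcases Fin.eq_zero_or_eq_succ t with rfl | ⟨t', rfl⟩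
    · exfalso
      apply hij
      rw [← hut, ← hvt]
      simp
    · apply mk_eq_iff.2
      right
      refine ⟨t', by simpa using ht, i, j, hij, ?_, by simpa using hut, by simpa using hvt, ?_⟩
      · intro k hk
        have := hlt k.succ (by simpa [Fin.succ_lt_succ_iff] using hk)
        simpa using this
      · intro k hk
        have := hgt k.succ (by simpa [Fin.succ_lt_succ_iff] using hk)
        simpa using this

theorem mem_range_phi {n : ℕ} {a : Fin 3} {x : Vt (n+1)} :
    x ∈ Set.range (phi (n := n) a) ↔ ∃ w : W (n+1), w 0 = a ∧ mkQ (n+1) w = x := by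
  constructor
  · rintro ⟨y, rfl⟩
    refine ⟨Fin.cons a (Quotient.out y), by simp, ?_⟩
    rw [← phi_mk]
    congr 1
    exact Quotient.out_eq y
  · rintro ⟨w, hw0, rfl⟩
    refine ⟨mkQ n (Fin.tail w), ?_⟩
    rw [phi_mk, ← hw0, Fin.cons_self_tail]

/-- Two distinct copies only meet in their shared junction vertex. -/
theorem range_phi_inter {n : ℕ} {a b : Fin 3} (hab : a ≠ b) {x : Vt (n+1)}
    (ha : x ∈ Set.range (phi (n := n) a)) (hb : x ∈ Set.range (phi (n := n) b)) :
    x = mkQ (n+1) (Fin.cons a (cnst n b)) := by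
  obtain ⟨w1, hw1, rfl⟩ := mem_range_phi.1 ha
  obtain ⟨w2, hw2, he⟩ := mem_range_phi.1 hb
  have hne : w2 0 ≠ w1 0 := by rw [hw1, hw2]; exact hab.symm
  have h1 : w1 = Fin.cons (w1 0) (Fin.tail w1) := (Fin.cons_self_tail w1).symm
  rcases mk_eq_iff.1 he.symm with h | h
  · exact absurd (congrFun h 0) (fun hh => hab (by rw [← hw1, hh, hw2]))
  · have h' : ncr (n+1) (Fin.cons (w1 0) (Fin.tail w1)) w2 := by rwa [← h1]
    obtain ⟨hc1, hc2⟩ := cons_head_ne_aux h' (by rw [hw2, hw1]; exact hab.symm)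
    rw [← h1] at hc1
    rw [hc1, hw1, hw2]

theorem junction_eq {n : ℕ} {a b : Fin 3} (hab : a ≠ b) :
    mkQ (n+1) (Fin.cons a (cnst n b)) = mkQ (n+1) (Fin.cons b (cnst n a)) := by
  apply mk_eq_iff.2
  right
  refine ⟨0, by simp, a, b, hab, ?_, by simp, by simp, ?_⟩
  · intro k hk
    exact absurd hk (by simp)
  · intro k hk
    rcases Fin.eq_zero_or_eq_succ k with rfl | ⟨k', rfl⟩
    · exact absurd hk (by simp)
    · simp

/-- Every edge of the triangle graph lies within a single copy. -/
theorem edge_within {n : ℕ} {x y : Vt (n+1)}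
    (h : (sierpinskiTriangle 3 (n+1)).Adj x y) :
    ∃ a : Fin 3, x ∈ Set.range (phi (n := n) a) ∧ y ∈ Set.range (phi (n := n) a) := by
  obtain ⟨hne, s, i, j, hij, hx, hy⟩ := adj_iff.1 h
  refine ⟨s 0, mem_range_phi.2 ⟨Fin.snoc s i, ?_, hx.symm⟩,
    mem_range_phi.2 ⟨Fin.snoc s j, ?_, hy.symm⟩⟩
  · exact snoc_zero s i
  · exact snoc_zero s j

/-- The copy map reflects adjacency. -/
theorem phi_adj_reflect {n : ℕ} {a : Fin 3} {x y : Vt n}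
    (h : (sierpinskiTriangle 3 (n+1)).Adj (phi a x) (phi a y)) :
    (sierpinskiTriangle 3 n).Adj x y := by
  obtain ⟨hne, s, i, j, hij, hx, hy⟩ := adj_iff.1 h
  have hxyne : x ≠ y := fun hh => hne (by rw [hh])
  by_cases hs0 : s 0 = a
  · have hsx : (Fin.snoc s i : W (n+1)) = (Fin.cons a (Fin.snoc (Fin.tail s) i) : W (n+1)) := by
      rw [Fin.cons_snoc_eq_snoc_cons, ← hs0, Fin.cons_self_tail]
    have hsy : (Fin.snoc s j : W (n+1)) = (Fin.cons a (Fin.snoc (Fin.tail s) j) : W (n+1)) := by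
      rw [Fin.cons_snoc_eq_snoc_cons, ← hs0, Fin.cons_self_tail]
    have hx' : x = mkQ n (Fin.snoc (Fin.tail s) i) := by
      apply phi_inj a
      rw [hx, phi_mk, hsx]
    have hy' : y = mkQ n (Fin.snoc (Fin.tail s) j) := by
      apply phi_inj a
      rw [hy, phi_mk, hsy]
    exact adj_iff.2 ⟨hxyne, Fin.tail s, i, j, hij, hx', hy'⟩
  · exfalso
    have hx1 : phi a x ∈ Set.range (phi (n := n) a) := ⟨x, rfl⟩
    have hx2 : phi a x ∈ Set.range (phi (n := n) (s 0)) := by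
      apply mem_range_phi.2
      exact ⟨Fin.snoc s i, snoc_zero s i, hx.symm⟩
    have hy1 : phi a y ∈ Set.range (phi (n := n) a) := ⟨y, rfl⟩
    have hy2 : phi a y ∈ Set.range (phi (n := n) (s 0)) := by
      apply mem_range_phi.2
      exact ⟨Fin.snoc s j, snoc_zero s j, hy.symm⟩
    have hane : a ≠ s 0 := fun hh => hs0 hh.symm
    have h1 := range_phi_inter hane hx1 hx2
    have h2 := range_phi_inter hane hy1 hy2
    exact hne (h1.trans h2.symm)

/-- The copy map preserves adjacency. -/
theorem phi_adj_pres {n : ℕ} {a : Fin 3} {x y : Vt n}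
    (h : (sierpinskiTriangle 3 n).Adj x y) :
    (sierpinskiTriangle 3 (n+1)).Adj (phi a x) (phi a y) := by
  obtain ⟨hne, s, i, j, hij, hx, hy⟩ := adj_iff.1 h
  apply adj_iff.2
  refine ⟨fun hh => hne (phi_inj a hh), (Fin.cons a s : Fin (n+1) → Fin 3), i, j, hij, ?_, ?_⟩
  · rw [hx, phi_mk, ← Fin.cons_snoc_eq_snoc_cons]
  · rw [hy, phi_mk, ← Fin.cons_snoc_eq_snoc_cons]


theorem corner_ne {n : ℕ} {a b : Fin 3} (h : mkQ n (cnst n a) = mkQ n (cnst n b)) : a = b :=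
  congrFun (eq_const_of_mk_eq h) 0

theorem cons_cnst {n : ℕ} (c : Fin 3) :
    (Fin.cons c (cnst n c) : W (n+1)) = cnst (n+1) c := by
  funext k
  rcases Fin.eq_zero_or_eq_succ k with rfl | ⟨k', rfl⟩ <;> simp [cnst]

theorem phi_corner {n : ℕ} (a c : Fin 3) :
    phi a (mkQ n (cnst n c)) = mkQ (n+1) (Fin.cons a (cnst n c)) := phi_mk a _

theorem corner_eq_phi {n : ℕ} (c : Fin 3) :
    mkQ (n+1) (cnst (n+1) c) = phi c (mkQ n (cnst n c)) := by
  rw [phi_corner, cons_cnst]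

/-- If the image of `phi a` is an extreme vertex class, then it comes from the
corresponding extreme vertex of the copy. -/
theorem phi_eq_corner {n : ℕ} {a c : Fin 3} {y : Vt n}
    (h : phi a y = mkQ (n+1) (cnst (n+1) c)) : a = c ∧ y = mkQ n (cnst n c) := by
  obtain ⟨w, rfl⟩ := Quotient.exists_rep y
  rw [phi_mk] at h
  have hw : (Fin.cons a w : W (n+1)) = cnst (n+1) c := eq_const_of_mk_eq h
  have ha : a = c := by simpa [cnst] using congrFun hw 0
  refine ⟨ha, ?_⟩
  have : w = cnst n c := by
    funext k
    simpa [cnst] using congrFun hw k.succ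
  rw [this]

/-- `phi` as a graph homomorphism. -/
def phiHom {n : ℕ} (a : Fin 3) : sierpinskiTriangle 3 n →g sierpinskiTriangle 3 (n+1) :=
  ⟨phi a, fun h => phi_adj_pres h⟩

def goodFVS (n : ℕ) (k : Fin 3) (Y : Finset (Vt n)) : Prop :=
  NoCycleIn (sierpinskiTriangle 3 n) (↑Y)ᶜ ∧ 2 * Y.card = 3^n + 1 ∧
  mkQ n (cnst n k) ∈ Y ∧ ∀ j : Fin 3, j ≠ k → mkQ n (cnst n j) ∉ Y

theorem vt0_cases (v : Vt 0) : ∃ c : Fin 3, v = mkQ 0 (cnst 0 c) := by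
  obtain ⟨w, rfl⟩ := Quotient.exists_rep v
  refine ⟨w 0, ?_⟩
  congr 1
  funext k
  have hk : k = 0 := Fin.ext (Nat.lt_one_iff.1 k.isLt)
  subst hk
  rfl

theorem goodFVS_zero (k : Fin 3) : ∃ Y, goodFVS 0 k Y := by
  classical
  obtain ⟨i, j, hij, hik, hjk, hcover⟩ :
      ∃ i j : Fin 3, i ≠ j ∧ i ≠ k ∧ j ≠ k ∧ ∀ c, c = i ∨ c = j ∨ c = k := by
    revert k; decide
  refine ⟨{mkQ 0 (cnst 0 k)}, ?_, by norm_num, Finset.mem_singleton_self _, ?_⟩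
  · rw [noCycleIn_iff]
    have hxm : mkQ 0 (cnst 0 i) ∈ (↑({mkQ 0 (cnst 0 k)} : Finset (Vt 0)) : Set (Vt 0))ᶜ := by
      simp only [Set.mem_compl_iff, Finset.coe_singleton, Set.mem_singleton_iff]
      exact fun h => hik (corner_ne h)
    have hym : mkQ 0 (cnst 0 j) ∈ (↑({mkQ 0 (cnst 0 k)} : Finset (Vt 0)) : Set (Vt 0))ᶜ := by
      simp only [Set.mem_compl_iff, Finset.coe_singleton, Set.mem_singleton_iff]
      exact fun h => hjk (corner_ne h)
    apply small_acyclic _ (⟨mkQ 0 (cnst 0 i), hxm⟩ : _) (⟨mkQ 0 (cnst 0 j), hym⟩ : _)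
    rintro ⟨v, hv⟩
    obtain ⟨c, rfl⟩ := vt0_cases v
    rcases hcover c with rfl | rfl | rfl
    · exact Or.inl rfl
    · exact Or.inr rfl
    · exfalso
      simp only [Set.mem_compl_iff, Finset.coe_singleton, Set.mem_singleton_iff] at hv
      exact hv trivial
  · intro c hc
    simp only [Finset.mem_singleton]
    exact fun h => hc (corner_ne h)

theorem goodFVS_succ (n : ℕ) (ih : ∀ k : Fin 3, ∃ Y, goodFVS n k Y) (k : Fin 3) :
    ∃ Y, goodFVS (n+1) k Y := by
  classical
  obtain ⟨i, j, hij, hik, hjk, hcover⟩ :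
      ∃ i j : Fin 3, i ≠ j ∧ i ≠ k ∧ j ≠ k ∧ ∀ c, c = i ∨ c = j ∨ c = k := by
    revert k; decide
  obtain ⟨Yk, hYk1, hYk2, hYk3, hYk4⟩ := ih k
  obtain ⟨Yi, hYi1, hYi2, hYi3, hYi4⟩ := ih j  -- copy i, distinguished corner j
  obtain ⟨Yj, hYj1, hYj2, hYj3, hYj4⟩ := ih i  -- copy j, distinguished corner i
  set A := Yk.image (phi (n := n) k) with hA
  set B := Yi.image (phi (n := n) i) with hB
  set C := Yj.image (phi (n := n) j) with hC
  set Y := A ∪ B ∪ C with hY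
  -- membership helpers
  have hmemA : ∀ {x}, x ∈ A → ∃ y ∈ Yk, phi k y = x := by
    intro x hx; simpa using Finset.mem_image.1 hx
  have hmemB : ∀ {x}, x ∈ B → ∃ y ∈ Yi, phi i y = x := by
    intro x hx; simpa using Finset.mem_image.1 hx
  have hmemC : ∀ {x}, x ∈ C → ∃ y ∈ Yj, phi j y = x := by
    intro x hx; simpa using Finset.mem_image.1 hx
  -- junction characterizations
  have hjunc : ∀ (a b : Fin 3), a ≠ b → ∀ x, x ∈ Set.range (phi (n := n) a) →
      x ∈ Set.range (phi (n := n) b) → x = phi a (mkQ n (cnst n b)) := by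
    intro a b hab x h1 h2
    rw [phi_corner]
    exact range_phi_inter hab h1 h2
  -- A is disjoint from B and C
  have hAB : ∀ x, x ∈ A → x ∈ B → False := by
    intro x hxA hxB
    obtain ⟨y, hy, hyx⟩ := hmemA hxA
    obtain ⟨z, hz, hzx⟩ := hmemB hxB
    have := hjunc k i (fun h => hik h.symm) x ⟨y, hyx⟩ ⟨z, hzx⟩
    rw [← hyx] at this
    have : y = mkQ n (cnst n i) := phi_inj k this
    rw [this] at hy
    exact hYk4 i hik hy
  have hAC : ∀ x, x ∈ A → x ∈ C → False := by
    intro x hxA hxC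
    obtain ⟨y, hy, hyx⟩ := hmemA hxA
    obtain ⟨z, hz, hzx⟩ := hmemC hxC
    have := hjunc k j (fun h => hjk h.symm) x ⟨y, hyx⟩ ⟨z, hzx⟩
    rw [← hyx] at this
    have : y = mkQ n (cnst n j) := phi_inj k this
    rw [this] at hy
    exact hYk4 j hjk hy
  -- the junction between copies i and j lies in both B and C
  have hmij : phi i (mkQ n (cnst n j)) = phi (n := n) j (mkQ n (cnst n i)) := by
    rw [phi_corner, phi_corner]
    exact junction_eq hij
  have hBC : B ∩ C = {phi i (mkQ n (cnst n j))} := by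
    apply Finset.ext
    intro x
    simp only [Finset.mem_inter, Finset.mem_singleton]
    constructor
    · rintro ⟨hxB, hxC⟩
      obtain ⟨y, hy, hyx⟩ := hmemB hxB
      obtain ⟨z, hz, hzx⟩ := hmemC hxC
      exact (hjunc i j hij x ⟨y, hyx⟩ ⟨z, hzx⟩)
    · rintro rfl
      constructor
      · exact Finset.mem_image.2 ⟨_, hYi3, rfl⟩
      · rw [hmij]
        exact Finset.mem_image.2 ⟨_, hYj3, rfl⟩
  -- cardinality
  have hcardA : A.card = Yk.card := Finset.card_image_of_injective _ (phi_inj k)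
  have hcardB : B.card = Yi.card := Finset.card_image_of_injective _ (phi_inj i)
  have hcardC : C.card = Yj.card := Finset.card_image_of_injective _ (phi_inj j)
  have hdisjABC : Disjoint A (B ∪ C) := by
    rw [Finset.disjoint_left]
    intro x hxA hxBC
    rcases Finset.mem_union.1 hxBC with h | h
    · exact hAB x hxA h
    · exact hAC x hxA h
  have hcardBC : (B ∪ C).card + 1 = Yi.card + Yj.card := by
    have := Finset.card_union_add_card_inter B C
    rw [hBC] at this
    simpa [hcardB, hcardC] using this
  have hcardY : Y.card + 1 = Yk.card + Yi.card + Yj.card := by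
    rw [hY, Finset.union_assoc, Finset.card_union_of_disjoint hdisjABC]
    omega
  have hcard : 2 * Y.card = 3^(n+1) + 1 := by
    have hp : (3:ℕ)^(n+1) = 3 * 3^n := by ring
    omega
  -- corner memberships
  have hcornerk : mkQ (n+1) (cnst (n+1) k) ∈ Y := by
    rw [corner_eq_phi]
    exact Finset.mem_union.2 (Or.inl (Finset.mem_union.2 (Or.inl
      (Finset.mem_image.2 ⟨_, hYk3, rfl⟩))))
  have hcornerelse : ∀ c : Fin 3, c ≠ k → mkQ (n+1) (cnst (n+1) c) ∉ Y := by
    intro c hck hcY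
    rcases Finset.mem_union.1 hcY with h | h
    · rcases Finset.mem_union.1 h with h | h
      · obtain ⟨y, hy, hyx⟩ := hmemA h
        obtain ⟨hkc, -⟩ := phi_eq_corner hyx
        exact hck hkc.symm
      · obtain ⟨y, hy, hyx⟩ := hmemB h
        obtain ⟨hic, hyc⟩ := phi_eq_corner hyx
        rw [hyc] at hy
        exact hYi4 c (fun h => hij (hic ▸ h)) hy
    · obtain ⟨y, hy, hyx⟩ := hmemC h
      obtain ⟨hjc, hyc⟩ := phi_eq_corner hyx
      rw [hyc] at hy
      exact hYj4 c (fun h => hij (h ▸ hjc).symm) hy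
  -- the FVS property via gluing
  have hfvs : NoCycleIn (sierpinskiTriangle 3 (n+1)) (↑Y)ᶜ := by
    set G := sierpinskiTriangle 3 (n+1) with hG
    set Sk : Set (Vt (n+1)) := Set.range (phi (n := n) k) \ ↑Y with hSk
    set Si : Set (Vt (n+1)) := Set.range (phi (n := n) i) \ ↑Y with hSi
    set Sj : Set (Vt (n+1)) := Set.range (phi (n := n) j) \ ↑Y with hSj
    -- each piece has no cycles
    have hpiece : ∀ (a : Fin 3) (Ya : Finset (Vt n)),
        NoCycleIn (sierpinskiTriangle 3 n) (↑Ya)ᶜ →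
        (Ya.image (phi (n := n) a) ⊆ Y) →
        NoCycleIn G (Set.range (phi (n := n) a) \ ↑Y) := by
      intro a Ya hYa hsub
      apply noCycleIn_transfer (phiHom (n := n) a) (phi_inj a)
        (fun u v h => phi_adj_reflect h) (T := (↑Ya)ᶜ) _ hYa
      rintro w ⟨⟨v, rfl⟩, hw2⟩
      refine ⟨v, ?_, rfl⟩
      intro hv
      exact hw2 (hsub (Finset.mem_image.2 ⟨_, hv, rfl⟩))
    have hsubA : A ⊆ Y := fun x hx => Finset.mem_union.2 (Or.inl (Finset.mem_union.2 (Or.inl hx)))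
    have hsubB : B ⊆ Y := fun x hx => Finset.mem_union.2 (Or.inl (Finset.mem_union.2 (Or.inr hx)))
    have hsubC : C ⊆ Y := fun x hx => Finset.mem_union.2 (Or.inr hx)
    have hNk : NoCycleIn G Sk := hpiece k Yk hYk1 hsubA
    have hNi : NoCycleIn G Si := hpiece i Yi hYi1 hsubB
    have hNj : NoCycleIn G Sj := hpiece j Yj hYj1 hsubC
    -- junction(i,j) is in Y
    have hmijY : phi i (mkQ n (cnst n j)) ∈ Y := hsubB (Finset.mem_image.2 ⟨_, hYi3, rfl⟩)
    -- gluing Sk and Si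
    have hglue1 : NoCycleIn G (Sk ∪ Si) := by
      apply glue_noCycle hNk hNi (z := phi k (mkQ n (cnst n i)))
      · rintro x ⟨⟨hx1, hx1'⟩, hx2, hx2'⟩
        exact hjunc k i (fun h => hik h.symm) x hx1 hx2
      · intro u v hu hv hadj
        obtain ⟨a, hua, hva⟩ := edge_within hadj
        have huY : u ∉ (↑Y : Set (Vt (n+1))) := by
          rcases hu with h | h <;> exact h.2
        have hvY : v ∉ (↑Y : Set (Vt (n+1))) := by
          rcases hv with h | h <;> exact h.2
        rcases hcover a with h0 | h0 | h0
        · -- a = i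
          rw [h0] at hua hva
          exact Or.inr ⟨⟨hua, huY⟩, ⟨hva, hvY⟩⟩
        · -- a = j : both endpoints must be the junction (k,j); contradiction
          rw [h0] at hua hva
          exfalso
          have huj : u = phi k (mkQ n (cnst n j)) := by
            rcases hu with h | h
            · exact hjunc k j (fun hh => hjk hh.symm) u h.1 hua
            · exfalso
              have := hjunc i j hij u h.1 hua
              rw [this] at huY
              exact huY hmijY
          have hvj : v = phi k (mkQ n (cnst n j)) := by
            rcases hv with h | h
            · exact hjunc k j (fun hh => hjk hh.symm) v h.1 hva
            · exfalso
              have := hjunc i j hij v h.1 hva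
              rw [this] at hvY
              exact hvY hmijY
          exact hadj.1 (huj.trans hvj.symm)
        · -- a = k
          rw [h0] at hua hva
          exact Or.inl ⟨⟨hua, huY⟩, ⟨hva, hvY⟩⟩
    -- gluing with Sj
    have hglue2 : NoCycleIn G ((Sk ∪ Si) ∪ Sj) := by
      apply glue_noCycle hglue1 hNj (z := phi k (mkQ n (cnst n j)))
      · rintro x ⟨hx1, hx2, hx2'⟩
        rcases hx1 with ⟨hx1, hx1'⟩ | ⟨hx1, hx1'⟩
        · exact hjunc k j (fun h => hjk h.symm) x hx1 hx2
        · exfalso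
          have := hjunc i j hij x hx1 hx2
          rw [this] at hx1'
          exact hx1' hmijY
      · intro u v hu hv hadj
        obtain ⟨a, hua, hva⟩ := edge_within hadj
        have huY : u ∉ (↑Y : Set (Vt (n+1))) := by
          rcases hu with (h | h) | h <;> exact h.2
        have hvY : v ∉ (↑Y : Set (Vt (n+1))) := by
          rcases hv with (h | h) | h <;> exact h.2
        rcases hcover a with h0 | h0 | h0
        · rw [h0] at hua hva
          exact Or.inl ⟨Or.inr ⟨hua, huY⟩, Or.inr ⟨hva, hvY⟩⟩
        · rw [h0] at hua hva
          exact Or.inr ⟨⟨hua, huY⟩, ⟨hva, hvY⟩⟩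
        · rw [h0] at hua hva
          exact Or.inl ⟨Or.inl ⟨hua, huY⟩, Or.inl ⟨hva, hvY⟩⟩
    -- the union of the pieces is the whole complement
    have hcompl : (↑Y : Set (Vt (n+1)))ᶜ = (Sk ∪ Si) ∪ Sj := by
      apply Set.ext
      intro x
      constructor
      · intro hx
        obtain ⟨w, rfl⟩ := Quotient.exists_rep x
        have hxr : (Quotient.mk (triSetoid 3 (n+1)) w : Vt (n+1)) ∈ Set.range (phi (n := n) (w 0)) :=
          mem_range_phi.2 ⟨w, rfl, rfl⟩
        rcases hcover (w 0) with h0 | h0 | h0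
        · rw [h0] at hxr
          exact Or.inl (Or.inr ⟨hxr, hx⟩)
        · rw [h0] at hxr
          exact Or.inr ⟨hxr, hx⟩
        · rw [h0] at hxr
          exact Or.inl (Or.inl ⟨hxr, hx⟩)
      · intro hx
        rcases hx with (h | h) | h <;> exact h.2
    rw [hcompl]
    exact hglue2
  exact ⟨Y, hfvs, hcard, hcornerk, hcornerelse⟩

theorem exists_goodFVS : ∀ (n : ℕ) (k : Fin 3), ∃ Y, goodFVS n k Y := by
  intro n
  induction n with
  | zero => exact goodFVS_zero
  | succ n ih => exact goodFVS_succ n ih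

end Stmt11

open Stmt11 in
theorem stmt11 (n : Nat) (X : Finset (Quotient (triSetoid 3 n)))
    (hX : IsFeedbackVertexSet (sierpinskiTriangle 3 n) ↑X)
    (hmin : X.card = feedbackNumber (sierpinskiTriangle 3 n)) :
    ((↑X : Set (Quotient (triSetoid 3 n))) ∩
      Set.range (fun k : Fin 3 =>
        Quotient.mk (triSetoid 3 n) (fun _ => k))).Subsingleton := by
  intro a ha b hb
  by_contra hne
  obtain ⟨haX, ka, hka⟩ : a ∈ ↑X ∧ ∃ k : Fin 3, Quotient.mk (triSetoid 3 n) (fun _ => k) = a := by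
    obtain ⟨h1, h2⟩ := ha
    exact ⟨h1, h2⟩
  obtain ⟨hbX, kb, hkb⟩ : b ∈ ↑X ∧ ∃ k : Fin 3, Quotient.mk (triSetoid 3 n) (fun _ => k) = b := by
    obtain ⟨h1, h2⟩ := hb
    exact ⟨h1, h2⟩
  have hcount := count_lower hX haX hbX hne hka.symm hkb.symm
  obtain ⟨Y, hY1, hY2, -, -⟩ := exists_goodFVS n 0
  have hYfvs : IsFeedbackVertexSet (sierpinskiTriangle 3 n) ↑Y := noCycleIn_iff.1 hY1
  have hle : feedbackNumber (sierpinskiTriangle 3 n) ≤ Y.card :=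
    Nat.sInf_le ⟨Y, rfl, hYfvs⟩
  rw [← hmin] at hle
  omega
end
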